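/- arXiv:2008.04282 — 14 statements merged into one kernel-verified Lean document; each statement's English description precedes it below -/
import Mathlib

section
/- For a connected graph G, the strong dimension of G equals the vertex covering number of its strong resolving graph, i.e., β_s(G) = α(G_SR). -/
open SimpleGraph

/-- The strong product of `k` copies of the path `P_n` (vertices labeled `0,…,n-1`). -/
def strongPow (n k : ℕ) : SimpleGraph (Fin k → Fin n) where
  Adj x y := x ≠ y ∧ ∀ i, ((x i : ℤ) - (y i : ℤ)).natAbs ≤ 1
  symm := ⟨fun x y h => ⟨h.1.symm, fun i => by have := h.2 i; omega⟩⟩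
  loopless := ⟨fun x h => h.1 rfl⟩

/-- `w` strongly resolves `u` and `v`: `v` lies on a shortest `u`–`w` path or
`u` lies on a shortest `v`–`w` path. -/
def stronglyResolves {V : Type*} (G : SimpleGraph V) (w u v : V) : Prop :=
  G.dist u w = G.dist u v + G.dist v w ∨ G.dist v w = G.dist v u + G.dist u w

/-- `W` is a strong resolving set of `G`. -/
def isStrongResolvingSet {V : Type*} (G : SimpleGraph V) (W : Set V) : Prop :=
  ∀ u v : V, u ≠ v → ∃ w ∈ W, stronglyResolves G w u v

/-- The strong dimension `β_s(G)`. -/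
noncomputable def strongDim (V : Type*) [Fintype V] (G : SimpleGraph V) : ℕ :=
  sInf {n | ∃ W : Finset V, W.card = n ∧ isStrongResolvingSet G ↑W}

/-- `u` and `v` are mutually maximally distant in `G`. -/
def mutuallyMaxDistant {V : Type*} (G : SimpleGraph V) (u v : V) : Prop :=
  (∀ x, G.Adj v x → G.dist u x ≤ G.dist u v) ∧ (∀ x, G.Adj u x → G.dist v x ≤ G.dist v u)

/-- The strong resolving graph `G_SR`. -/
def strongResolvingGraph {V : Type*} (G : SimpleGraph V) : SimpleGraph V where
  Adj u v := u ≠ v ∧ mutuallyMaxDistant G u v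
  symm := ⟨fun u v h => ⟨h.1.symm, h.2.2, h.2.1⟩⟩
  loopless := ⟨fun u h => h.1 rfl⟩

/-- The vertex covering number `α(H)`. -/
noncomputable def coverNumber (V : Type*) [Fintype V] (H : SimpleGraph V) : ℕ :=
  sInf {n | ∃ C : Finset V, C.card = n ∧ ∀ u v, H.Adj u v → u ∈ C ∨ v ∈ C}

/-- The threshold strong dimension `τ_s(G)`. -/
noncomputable def thresholdStrongDim (V : Type*) [Fintype V] (G : SimpleGraph V) : ℕ :=
  sInf {n | ∃ H : SimpleGraph V, G ≤ H ∧
    ∃ W : Finset V, W.card = n ∧ isStrongResolvingSet H ↑W}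

/-- A `W`-resolved embedding of `G` in the strong product of `k` copies of `P_{D+1}`,
where `W` is enumerated by `w : Fin k → V`.  The induced subgraph `φ(G)` is represented
by the comap (pullback) of the strong product along the injective map `φ`. -/
def IsWResolvedEmbedding {V : Type*} (G : SimpleGraph V) (D k : ℕ) (w : Fin k → V)
    (φ : V → (Fin k → Fin (D + 1))) : Prop :=
  Function.Injective φ ∧
  (∀ u v, G.Adj u v → (strongPow (D + 1) k).Adj (φ u) (φ v)) ∧
  ∀ x i, ((φ x i : ℕ)) = (SimpleGraph.comap φ (strongPow (D + 1) k)).dist x (w i)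

/-- The image `φ(G)` is an isometric subgraph of the strong product. -/
def IsIsometricImage {V : Type*} (D k : ℕ) (φ : V → (Fin k → Fin (D + 1))) : Prop :=
  ∀ u v, (SimpleGraph.comap φ (strongPow (D + 1) k)).dist u v
      = (strongPow (D + 1) k).dist (φ u) (φ v)

/-- `W` is a (metric) resolving set of `G`. -/
def isResolvingSet {V : Type*} (G : SimpleGraph V) (W : Set V) : Prop :=
  ∀ u v : V, u ≠ v → ∃ w ∈ W, G.dist u w ≠ G.dist v w

/-- The metric dimension `β(G)`. -/
noncomputable def metricDim (V : Type*) [Fintype V] (G : SimpleGraph V) : ℕ :=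
  sInf {n | ∃ W : Finset V, W.card = n ∧ isResolvingSet G ↑W}


section Aux

variable {V : Type*} [Fintype V] {G : SimpleGraph V}

lemma dist_lt_card (hG : G.Connected) (u v : V) : G.dist u v < Fintype.card V := by
  classical
  obtain ⟨p, hp⟩ := hG.exists_walk_length_eq_dist u v
  calc G.dist u v ≤ p.bypass.length := SimpleGraph.dist_le _
    _ < Fintype.card V := p.bypass_isPath.length_lt

lemma adj_dist_le (hG : G.Connected) {a x : V} (h : G.Adj a x) : G.dist a x ≤ 1 := by
  simpa using SimpleGraph.dist_le (h.toWalk)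

/-- Extension lemma: from any `a` we can reach a vertex `a'` maximally distant from `b`
with `a` on a shortest `b`-`a'` path. -/
lemma extend_aux (hG : G.Connected) (b : V) :
    ∀ n a, Fintype.card V ≤ G.dist b a + n →
    ∃ a', (∀ x, G.Adj a' x → G.dist b x ≤ G.dist b a') ∧
      G.dist b a' = G.dist b a + G.dist a a' := by
  intro n
  induction n with
  | zero => intro a h; exact absurd h (by simpa using dist_lt_card hG b a)
  | succ n ih =>
    intro a h
    by_cases hmax : ∀ x, G.Adj a x → G.dist b x ≤ G.dist b a
    · exact ⟨a, hmax, by simp [SimpleGraph.dist_self]⟩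
    · push_neg at hmax
      obtain ⟨x, hax, hx⟩ := hmax
      have h1 : G.dist b x ≤ G.dist b a + 1 :=
        le_trans (hG.dist_triangle (v := a)) (by have := adj_dist_le hG hax; omega)
      have hbx : G.dist b x = G.dist b a + 1 := by omega
      obtain ⟨a', ha'max, ha'⟩ := ih x (by omega)
      refine ⟨a', ha'max, ?_⟩
      have t1 : G.dist a a' ≤ G.dist a x + G.dist x a' := hG.dist_triangle (v := x)
      have t2 : G.dist b a' ≤ G.dist b a + G.dist a a' := hG.dist_triangle (v := a)
      have hax1 : G.dist a x ≤ 1 := adj_dist_le hG hax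
      omega

lemma extend (hG : G.Connected) (b a : V) :
    ∃ a', (∀ x, G.Adj a' x → G.dist b x ≤ G.dist b a') ∧
      G.dist b a' = G.dist b a + G.dist a a' :=
  extend_aux hG b (Fintype.card V) a (by omega)

/-- A vertex cover of the strong resolving graph is a strong resolving set. -/
lemma cover_to_srs (hG : G.Connected) (C : Finset V)
    (hC : ∀ u v, (strongResolvingGraph G).Adj u v → u ∈ C ∨ v ∈ C) :
    isStrongResolvingSet G ↑C := by
  intro u v huv
  obtain ⟨u', hu'max, hu'⟩ := extend hG v u
  obtain ⟨v', hv'max, hv'⟩ := extend hG u' v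
  -- distances rewritten with comm
  have hvu' : G.dist v u' = G.dist v u + G.dist u u' := hu'
  have hu'v' : G.dist u' v' = G.dist u' v + G.dist v v' := hv'
  have hu'v : G.dist u' v = G.dist v u' := SimpleGraph.dist_comm
  have hdvu : 0 < G.dist v u := hG.pos_dist_of_ne (Ne.symm huv)
  have hne : u' ≠ v' := by
    intro e
    have : G.dist u' v' = 0 := by rw [e]; exact SimpleGraph.dist_self
    omega
  have hmmd : mutuallyMaxDistant G u' v' := by
    constructor
    · exact hv'max
    · intro x hx
      have h1 : G.dist v x ≤ G.dist v u' := hu'max x hx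
      have t1 : G.dist v' x ≤ G.dist v' v + G.dist v x := hG.dist_triangle (v := v)
      have e1 : G.dist v' u' = G.dist u' v' := SimpleGraph.dist_comm
      have e2 : G.dist v' v = G.dist v v' := SimpleGraph.dist_comm
      omega
  have hadj : (strongResolvingGraph G).Adj u' v' := ⟨hne, hmmd⟩
  rcases hC u' v' hadj with h | h
  · exact ⟨u', h, Or.inr hu'⟩
  · refine ⟨v', h, Or.inl ?_⟩
    -- d(u,v') = d(u,v) + d(v,v')
    have t1 : G.dist u' v' ≤ G.dist u' u + G.dist u v' := hG.dist_triangle (v := u)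
    have t2 : G.dist u v' ≤ G.dist u v + G.dist v v' := hG.dist_triangle (v := v)
    have e1 : G.dist u' u = G.dist u u' := SimpleGraph.dist_comm
    have e2 : G.dist u v = G.dist v u := SimpleGraph.dist_comm
    omega

/-- A strong resolving set is a vertex cover of the strong resolving graph. -/
lemma srs_to_cover (hG : G.Connected) (W : Finset V)
    (hW : isStrongResolvingSet G ↑W) :
    ∀ u v, (strongResolvingGraph G).Adj u v → u ∈ W ∨ v ∈ W := by
  intro u v ⟨hne, hmmd⟩
  obtain ⟨w, hwW, hw⟩ := hW u v hne
  have key : ∀ a c : V, (∀ x, G.Adj c x → G.dist a x ≤ G.dist a c) →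
      G.dist a w = G.dist a c + G.dist c w → w = c := by
    intro a c hmax heq
    by_contra hwc
    have hcw : 0 < G.dist c w := hG.pos_dist_of_ne (Ne.symm hwc)
    obtain ⟨p, hp⟩ := hG.exists_walk_length_eq_dist c w
    cases p with
    | nil => simp at hp; omega
    | cons hadj q =>
      rename_i x
      have hq : G.dist x w ≤ q.length := SimpleGraph.dist_le q
      have hplen : q.length + 1 = G.dist c w := by simpa using hp
      have t1 : G.dist a w ≤ G.dist a x + G.dist x w := hG.dist_triangle (v := x)
      have hx : G.dist a x ≤ G.dist a c := hmax x hadj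
      omega
  rcases hw with h | h
  · have := key u v hmmd.1 h
    exact Or.inr (this ▸ hwW)
  · have := key v u hmmd.2 h
    exact Or.inl (this ▸ hwW)

end Aux

/-- For a connected graph `G`, `β_s(G) = α(G_SR)`. -/
theorem strongDim_eq_coverNumber_strongResolvingGraph {V : Type*} [Fintype V]
    (G : SimpleGraph V) (hG : G.Connected) :
    strongDim V G = coverNumber V (strongResolvingGraph G) := by
  have hset : {n | ∃ W : Finset V, W.card = n ∧ isStrongResolvingSet G ↑W}
      = {n | ∃ C : Finset V, C.card = n ∧
          ∀ u v, (strongResolvingGraph G).Adj u v → u ∈ C ∨ v ∈ C} := by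
    ext n
    constructor
    · rintro ⟨W, hcard, hW⟩
      exact ⟨W, hcard, srs_to_cover hG W hW⟩
    · rintro ⟨C, hcard, hC⟩
      exact ⟨C, hcard, cover_to_srs hG C hC⟩
  rw [strongDim, coverNumber, hset]
end

section
/- Let G be a connected graph of diameter D, let W = {w_1,...,w_k} ⊆ V(G), and let φ be a W-resolved embedding of G in the strong product of k copies of P_{D+1}. Then for every vertex x of G and every index i, the distance from φ(x) to φ(w_i) in the induced subgraph φ(G) equals the distance from φ(x) to φ(w_i) in the strong product P_{D+1}^{⊠,k}. -/
open SimpleGraph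

lemma coord_le_walk_length {n k : ℕ} {a b : Fin k → Fin n}
    (p : (strongPow n k).Walk a b) (i : Fin k) :
    ((a i : ℤ) - (b i : ℤ)).natAbs ≤ p.length := by
  induction p with
  | nil => simp
  | cons h p ih =>
    have := And.right h i
    simp only [SimpleGraph.Walk.length_cons]
    omega

/-- In a `W`-resolved embedding of `G` in `P_{D+1}^{⊠,k}`, the distance from `φ(x)` to
`φ(w_i)` in `φ(G)` equals the distance in the ambient strong product. -/
theorem WResolved_dist_eq {V : Type*} (G : SimpleGraph V) (hG : G.Connected)
    (D k : ℕ) (hD : G.diam = D) (w : Fin k → V) (hw : Function.Injective w)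
    (φ : V → (Fin k → Fin (D + 1))) (hφ : IsWResolvedEmbedding G D k w φ) :
    ∀ (x : V) (i : Fin k),
      (SimpleGraph.comap φ (strongPow (D + 1) k)).dist x (w i)
        = (strongPow (D + 1) k).dist (φ x) (φ (w i)) := by
  obtain ⟨hinj, hadj, hres⟩ := hφ
  intro x i
  set H := SimpleGraph.comap φ (strongPow (D + 1) k) with hH
  have hGH : G ≤ H := fun {u v} h => hadj u v h
  have hHconn : H.Connected := hG.mono hGH
  obtain ⟨p, hp⟩ := (hHconn x (w i)).exists_walk_length_eq_dist
  let f : H →g strongPow (D + 1) k := ⟨φ, fun h => h⟩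
  have h1 : (strongPow (D + 1) k).dist (φ x) (φ (w i)) ≤ H.dist x (w i) := by
    calc (strongPow (D + 1) k).dist (φ x) (φ (w i)) ≤ (p.map f).length :=
          SimpleGraph.dist_le _
      _ = H.dist x (w i) := by rw [SimpleGraph.Walk.length_map, hp]
  have h2 : H.dist x (w i) ≤ (strongPow (D + 1) k).dist (φ x) (φ (w i)) := by
    have hr2 : (strongPow (D + 1) k).Reachable (φ x) (φ (w i)) := ⟨p.map f⟩
    obtain ⟨q, hq⟩ := hr2.exists_walk_length_eq_dist
    have hle := coord_le_walk_length q i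
    rw [hq] at hle
    have hx := hres x i
    have hwii : ((φ (w i) i : ℕ)) = 0 := by
      rw [hres (w i) i]; exact SimpleGraph.dist_self
    omega
  omega
end

section
/- Let G be a connected graph of diameter D and W = {w_1,...,w_k} ⊆ V(G). Then W is a strong resolving set for some graph H having G as a spanning subgraph if and only if there is a W-resolved embedding φ of G in the strong product of k copies of P_{D+1} such that φ(G) is an isometric subgraph of P_{D+1}^{⊠,k}. -/
open SimpleGraph

section Aux

open Finset in
lemma strongPow_walk_le (n k : ℕ) (y : Fin k → Fin n) :
    ∀ M : ℕ, ∀ x : Fin k → Fin n, (∀ i, ((x i : ℤ) - (y i : ℤ)).natAbs ≤ M) →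
      ∃ p : (strongPow n k).Walk x y, p.length ≤ M := by
  intro M
  induction M with
  | zero =>
    intro x h
    have hxy : x = y := funext fun i => Fin.ext (by have := h i; omega)
    subst hxy
    exact ⟨SimpleGraph.Walk.nil, by simp⟩
  | succ M ih =>
    intro x h
    by_cases hxy : x = y
    · subst hxy; exact ⟨SimpleGraph.Walk.nil, by simp⟩
    · set z : Fin k → Fin n := fun i =>
        if _ : (x i : ℕ) < (y i : ℕ) then ⟨(x i : ℕ) + 1, by have := (y i).isLt; omega⟩
        else if _ : (y i : ℕ) < (x i : ℕ) then ⟨(x i : ℕ) - 1, by have := (x i).isLt; omega⟩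
        else x i with hz
      have hzval : ∀ i, (z i : ℕ) = if (x i : ℕ) < (y i : ℕ) then (x i : ℕ) + 1
          else if (y i : ℕ) < (x i : ℕ) then (x i : ℕ) - 1 else (x i : ℕ) := by
        intro i
        simp only [hz]
        by_cases h1 : (x i : ℕ) < (y i : ℕ)
        · rw [dif_pos h1, if_pos h1]
        · rw [dif_neg h1, if_neg h1]
          by_cases h2 : (y i : ℕ) < (x i : ℕ)
          · rw [dif_pos h2, if_pos h2]
          · rw [dif_neg h2, if_neg h2]
      have hne : x ≠ z := by
        intro hxz
        apply hxy
        funext i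
        have hxi : (x i : ℕ) = (z i : ℕ) := congrArg Fin.val (congrFun hxz i)
        rw [hzval i] at hxi
        apply Fin.ext
        split_ifs at hxi <;> omega
      have hadj : (strongPow n k).Adj x z := by
        refine ⟨hne, fun i => ?_⟩
        have h4 := hzval i
        split_ifs at h4 <;> omega
      obtain ⟨p, hp⟩ := ih z (by
        intro i
        have h3 := h i
        have h4 := hzval i
        split_ifs at h4 <;> omega)
      exact ⟨SimpleGraph.Walk.cons hadj p, by
        rw [SimpleGraph.Walk.length_cons]; omega⟩

lemma strongPow_walk_ge {n k : ℕ} {x y : Fin k → Fin n} (p : (strongPow n k).Walk x y)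
    (i : Fin k) : ((x i : ℤ) - (y i : ℤ)).natAbs ≤ p.length := by
  induction p with
  | nil => simp
  | @cons a b c h p ih =>
    have h2 := h.2 i
    rw [SimpleGraph.Walk.length_cons]
    omega

lemma strongPow_dist (n k : ℕ) (x y : Fin k → Fin n) :
    (strongPow n k).dist x y
      = Finset.univ.sup (fun i => ((x i : ℤ) - (y i : ℤ)).natAbs) := by
  obtain ⟨p, hp⟩ := strongPow_walk_le n k y _ x (fun i =>
    Finset.le_sup (f := fun i => ((x i : ℤ) - (y i : ℤ)).natAbs) (Finset.mem_univ i))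
  refine le_antisymm ((SimpleGraph.dist_le p).trans hp) ?_
  apply Finset.sup_le
  intro i _
  obtain ⟨q, hq⟩ := p.reachable.exists_walk_length_eq_dist
  rw [← hq]
  exact strongPow_walk_ge q i

lemma comap_walk {V W : Type*} (H : SimpleGraph W) (φ : V → W) {u v : V}
    (p : (SimpleGraph.comap φ H).Walk u v) :
    ∃ q : H.Walk (φ u) (φ v), q.length = p.length := by
  induction p with
  | nil => exact ⟨SimpleGraph.Walk.nil, rfl⟩
  | cons h p ih =>
    obtain ⟨q, hq⟩ := ih
    exact ⟨SimpleGraph.Walk.cons h q, congrArg (· + 1) hq⟩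

lemma dist_anti_of_reachable {V : Type*} {G G' : SimpleGraph V} (h : G ≤ G') {u v : V}
    (hr : G.Reachable u v) : G'.dist u v ≤ G.dist u v := by
  obtain ⟨p, hp⟩ := hr.exists_walk_length_eq_dist
  calc G'.dist u v ≤ (p.mapLe h).length := SimpleGraph.dist_le _
    _ = p.length := by simp
    _ = G.dist u v := hp

end Aux

/-- `W = {w_1,…,w_k}` is a strong resolving set for some graph `H` having `G` as a spanning
subgraph iff there is a `W`-resolved embedding of `G` in `P_{D+1}^{⊠,k}` whose image is an
isometric subgraph of `P_{D+1}^{⊠,k}`. -/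
theorem strongResolving_iff_isometric_WResolvedEmbedding {V : Type*} [Fintype V]
    (G : SimpleGraph V) (hG : G.Connected) (D k : ℕ) (hD : G.diam = D)
    (w : Fin k → V) (hw : Function.Injective w) :
    (∃ H : SimpleGraph V, G ≤ H ∧
        ∀ u v : V, u ≠ v → ∃ i : Fin k, stronglyResolves H (w i) u v) ↔
    (∃ φ : V → (Fin k → Fin (D + 1)),
        IsWResolvedEmbedding G D k w φ ∧ IsIsometricImage D k φ) := by
  constructor
  · rintro ⟨H, hGH, hres⟩
    have hHconn : H.Connected := hG.mono hGH
    have hNe : Nonempty V := hG.nonempty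
    have hedtop : G.ediam ≠ ⊤ := by
      obtain ⟨a, b, hab⟩ := SimpleGraph.exists_edist_eq_ediam_of_finite (G := G)
      rw [← hab]
      exact SimpleGraph.edist_ne_top_iff_reachable.mpr (hG a b)
    have hdistH : ∀ u v : V, H.dist u v ≤ D := fun u v =>
      le_trans (dist_anti_of_reachable hGH (hG u v))
        (hD ▸ SimpleGraph.dist_le_diam hedtop)
    set φ : V → Fin k → Fin (D + 1) :=
      fun x i => ⟨H.dist x (w i), Nat.lt_succ_of_le (hdistH _ _)⟩ with hφ
    have eφ : ∀ x i, ((φ x i : ℕ)) = H.dist x (w i) := fun x i => rfl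
    have eφz : ∀ x i, ((φ x i : ℤ)) = ((H.dist x (w i) : ℕ) : ℤ) := fun x i => rfl
    have hcheb : ∀ u v : V,
        Finset.univ.sup (fun i => ((φ u i : ℤ) - (φ v i : ℤ)).natAbs) = H.dist u v := by
      intro u v
      by_cases huv : u = v
      · subst huv
        rw [SimpleGraph.dist_self]
        exact Nat.le_antisymm (Finset.sup_le fun i _ => by omega) (Nat.zero_le _)
      · apply le_antisymm
        · apply Finset.sup_le
          intro i _
          have t1 := hHconn.dist_triangle (u := u) (v := v) (w := w i)
          have t2 := hHconn.dist_triangle (u := v) (v := u) (w := w i)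
          have hc : H.dist v u = H.dist u v := SimpleGraph.dist_comm
          have a1 := eφ u i
          have a2 := eφ v i
          omega
        · obtain ⟨i, hi⟩ := hres u v huv
          refine le_trans ?_
            (Finset.le_sup (f := fun i => ((φ u i : ℤ) - (φ v i : ℤ)).natAbs) (Finset.mem_univ i))
          have hc : H.dist v u = H.dist u v := SimpleGraph.dist_comm
          have a1 := eφ u i
          have a2 := eφ v i
          show H.dist u v ≤ ((φ u i : ℤ) - (φ v i : ℤ)).natAbs
          rcases hi with h1 | h2 <;> omega
    have hle : H ≤ SimpleGraph.comap φ (strongPow (D + 1) k) := by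
      intro a b hab
      refine ⟨?_, fun i => ?_⟩
      · intro hfab
        have h0 : Finset.univ.sup (fun i => ((φ a i : ℤ) - (φ b i : ℤ)).natAbs) = 0 :=
          Nat.le_antisymm (Finset.sup_le fun i _ => by rw [hfab]; omega) (Nat.zero_le _)
        rw [hcheb] at h0
        exact hab.ne (hHconn.dist_eq_zero_iff.mp h0)
      · have t1 := hHconn.dist_triangle (u := a) (v := b) (w := w i)
        have t2 := hHconn.dist_triangle (u := b) (v := a) (w := w i)
        have hc : H.dist b a = H.dist a b := SimpleGraph.dist_comm
        have hd1 : H.dist a b ≤ 1 := by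
          have := SimpleGraph.dist_le hab.toWalk
          simpa using this
        have a1 := eφ a i
        have a2 := eφ b i
        omega
    have hcomapdist : ∀ u v : V,
        (SimpleGraph.comap φ (strongPow (D + 1) k)).dist u v = H.dist u v := by
      intro u v
      apply le_antisymm
      · exact dist_anti_of_reachable hle (hHconn u v)
      · rw [← hcheb u v, ← strongPow_dist]
        have hr : (SimpleGraph.comap φ (strongPow (D + 1) k)).Reachable u v :=
          (hHconn u v).mono hle
        obtain ⟨p, hp⟩ := hr.exists_walk_length_eq_dist
        obtain ⟨q, hq⟩ := comap_walk (strongPow (D + 1) k) φ p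
        calc (strongPow (D + 1) k).dist (φ u) (φ v) ≤ q.length := SimpleGraph.dist_le q
          _ = p.length := hq
          _ = _ := hp
    refine ⟨φ, ⟨?_, ?_, ?_⟩, ?_⟩
    · intro a b hab
      have h0 : Finset.univ.sup (fun i => ((φ a i : ℤ) - (φ b i : ℤ)).natAbs) = 0 :=
        Nat.le_antisymm (Finset.sup_le fun i _ => by rw [hab]; omega) (Nat.zero_le _)
      rw [hcheb] at h0
      exact hHconn.dist_eq_zero_iff.mp h0
    · intro u v huv
      exact hle (hGH huv)
    · intro x i
      rw [hcomapdist]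
    · intro u v
      rw [hcomapdist, strongPow_dist, hcheb]
  · rintro ⟨φ, ⟨hinj, hadj, hcode⟩, hiso⟩
    refine ⟨SimpleGraph.comap φ (strongPow (D + 1) k), fun u v huv => hadj u v huv, ?_⟩
    intro u v huv
    have hfne : φ u ≠ φ v := fun h => huv (hinj h)
    have hk : Nonempty (Fin k) := by
      by_contra hk
      exact hfne (funext fun i => absurd ⟨i⟩ hk)
    have hdist : (SimpleGraph.comap φ (strongPow (D + 1) k)).dist u v
        = Finset.univ.sup (fun i => ((φ u i : ℤ) - (φ v i : ℤ)).natAbs) := by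
      rw [hiso u v, strongPow_dist]
    obtain ⟨i, -, hi⟩ := Finset.exists_mem_eq_sup Finset.univ Finset.univ_nonempty
      (fun i => ((φ u i : ℤ) - (φ v i : ℤ)).natAbs)
    refine ⟨i, ?_⟩
    have e1 := (hcode u i).symm
    have e2 := (hcode v i).symm
    have e3 : (SimpleGraph.comap φ (strongPow (D + 1) k)).dist v u
        = (SimpleGraph.comap φ (strongPow (D + 1) k)).dist u v := SimpleGraph.dist_comm
    have key : (SimpleGraph.comap φ (strongPow (D + 1) k)).dist u v
        = (((φ u i : ℕ) : ℤ) - ((φ v i : ℕ) : ℤ)).natAbs := by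
      rw [hdist, hi]
    unfold stronglyResolves
    omega
end

section
/- Let G be a connected graph of diameter D. The threshold strong dimension τ_s(G) equals the minimum cardinality of a set W ⊆ V(G) for which there exists a W-resolved embedding φ of G in the strong product of |W| copies of P_{D+1} such that φ(G) is an isometric subgraph of P_{D+1}^{⊠,|W|}. -/
open SimpleGraph

lemma lipschitz_natAbs_le_dist {V : Type*} (G' : SimpleGraph V) (f : V → ℤ)
    (hf : ∀ a b, G'.Adj a b → (f a - f b).natAbs ≤ 1) {u v : V} (h : G'.Reachable u v) :
    (f u - f v).natAbs ≤ G'.dist u v := by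
  obtain ⟨p, hp⟩ := h.exists_walk_length_eq_dist
  rw [← hp]
  clear hp h
  induction p with
  | nil => simp
  | @cons a b c hadj q ih =>
    have := hf _ _ hadj
    simp only [SimpleGraph.Walk.length_cons]
    omega

lemma strongPow_walk_exists (n k : ℕ) :
    ∀ (M : ℕ) (x y : Fin k → Fin n), (∀ i, ((x i : ℤ) - (y i : ℤ)).natAbs ≤ M) →
    ∃ p : (strongPow n k).Walk x y, p.length ≤ M := by
  intro M
  induction M with
  | zero =>
    intro x y h
    have : x = y := funext fun i => Fin.ext (by have := h i; omega)
    subst this; exact ⟨.nil, by simp⟩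
  | succ M ih =>
    intro x y h
    by_cases hxy : x = y
    · subst hxy; exact ⟨.nil, by simp⟩
    · classical
      have hn : ∀ i : Fin k, (if (x i : ℕ) < (y i : ℕ) then (x i : ℕ) + 1
          else if (y i : ℕ) < (x i : ℕ) then (x i : ℕ) - 1 else (x i : ℕ)) < n := by
        intro i
        have h1 := (x i).isLt; have h2 := (y i).isLt
        split_ifs <;> omega
      set x' : Fin k → Fin n := fun i => ⟨_, hn i⟩ with hx'
      have hvals : ∀ i, ((x' i : ℕ) = (x i : ℕ) + 1 ∧ (x i : ℕ) < (y i : ℕ)) ∨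
          ((x' i : ℕ) + 1 = (x i : ℕ) ∧ (y i : ℕ) < (x i : ℕ)) ∨
          ((x' i : ℕ) = (x i : ℕ) ∧ (x i : ℕ) = (y i : ℕ)) := by
        intro i
        simp only [hx']
        split_ifs with h1 h2 <;> simp <;> omega
      have hadj : (strongPow n k).Adj x x' := by
        refine ⟨?_, ?_⟩
        · intro hx
          apply hxy
          funext i
          have hcongr : (x i : ℕ) = (x' i : ℕ) := by rw [hx]
          rcases hvals i with ⟨h1, h2⟩ | ⟨h1, h2⟩ | ⟨h1, h2⟩ <;> (apply Fin.ext; omega)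
        · intro i
          rcases hvals i with ⟨h1, h2⟩ | ⟨h1, h2⟩ | ⟨h1, h2⟩ <;> omega
      have h' : ∀ i, ((x' i : ℤ) - (y i : ℤ)).natAbs ≤ M := by
        intro i
        have := h i
        rcases hvals i with ⟨h1, h2⟩ | ⟨h1, h2⟩ | ⟨h1, h2⟩ <;> omega
      obtain ⟨p, hp⟩ := ih x' y h'
      exact ⟨.cons hadj p, by simp only [SimpleGraph.Walk.length_cons]; omega⟩

lemma strongPow_reachable (n k : ℕ) (x y : Fin k → Fin n) :
    (strongPow n k).Reachable x y := by
  obtain ⟨p, _⟩ := strongPow_walk_exists n k n x y (fun i => by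
    have := (x i).isLt; have := (y i).isLt; omega)
  exact ⟨p⟩

lemma strongPow_dist_le (n k M : ℕ) (x y : Fin k → Fin n)
    (h : ∀ i, ((x i : ℤ) - (y i : ℤ)).natAbs ≤ M) : (strongPow n k).dist x y ≤ M := by
  obtain ⟨p, hp⟩ := strongPow_walk_exists n k M x y h
  exact le_trans (SimpleGraph.dist_le p) hp

lemma coord_le_strongPow_dist (n k : ℕ) (x y : Fin k → Fin n) (i : Fin k) :
    ((x i : ℤ) - (y i : ℤ)).natAbs ≤ (strongPow n k).dist x y :=
  lipschitz_natAbs_le_dist (strongPow n k) (fun z => (z i : ℤ)) (fun _ _ hab => hab.2 i)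
    (strongPow_reachable n k x y)

/-- Geometric characterization of the threshold strong dimension. -/
theorem thresholdStrongDim_eq_min_isometric_WResolvedEmbedding {V : Type*} [Fintype V]
    (G : SimpleGraph V) (hG : G.Connected) (D : ℕ) (hD : G.diam = D) :
    thresholdStrongDim V G =
      sInf {k : ℕ | ∃ w : Fin k → V, Function.Injective w ∧
        ∃ φ : V → (Fin k → Fin (D + 1)),
          IsWResolvedEmbedding G D k w φ ∧ IsIsometricImage D k φ} := by
  classical
  have hV : Nonempty V := hG.nonempty
  unfold thresholdStrongDim
  congr 1
  ext n
  simp only [Set.mem_setOf_eq]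
  constructor
  · rintro ⟨H, hle, W, hWcard, hWres⟩
    have hH : H.Connected := hG.mono hle
    have hGediam : G.ediam ≠ ⊤ := by
      obtain ⟨u, v, huv⟩ := SimpleGraph.exists_edist_eq_ediam_of_finite (G := G)
      rw [← huv]
      exact (SimpleGraph.edist_ne_top_iff_reachable).mpr (hG u v)
    have hHd : ∀ x y : V, H.dist x y ≤ D := by
      intro x y
      obtain ⟨p, hp⟩ := hG.exists_walk_length_eq_dist x y
      calc H.dist x y ≤ (p.mapLe hle).length := SimpleGraph.dist_le _
        _ = G.dist x y := by rw [SimpleGraph.Walk.length_map, hp]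
        _ ≤ G.diam := SimpleGraph.dist_le_diam hGediam
        _ = D := hD
    set e := W.equivFin with he
    set w : Fin n → V := fun i => (e.symm (Fin.cast hWcard.symm i) : V) with hw
    have hwinj : Function.Injective w := by
      intro i j hij
      have h2 : Fin.cast hWcard.symm i = Fin.cast hWcard.symm j :=
        e.symm.injective (Subtype.coe_injective hij)
      exact Fin.ext (by simpa using congrArg Fin.val h2)
    have hwsurj : ∀ x ∈ W, ∃ i, w i = x := by
      intro x hx
      refine ⟨Fin.cast hWcard (e ⟨x, hx⟩), ?_⟩
      simp only [hw]
      rw [show Fin.cast hWcard.symm (Fin.cast hWcard (e ⟨x, hx⟩)) = e ⟨x, hx⟩ from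
        Fin.ext (by simp)]
      simp
    set φ : V → (Fin n → Fin (D + 1)) :=
      fun x i => ⟨H.dist x (w i), Nat.lt_succ_of_le (hHd x (w i))⟩ with hφ
    have hcomm : ∀ x y : V, H.dist x y = H.dist y x := fun x y => SimpleGraph.dist_comm
    have htri : ∀ u v : V, ∀ i, ((H.dist u (w i) : ℤ) - (H.dist v (w i) : ℤ)).natAbs
        ≤ H.dist u v := by
      intro u v i
      have h1 := hH.dist_triangle (u := u) (v := v) (w := w i)
      have h2 := hH.dist_triangle (u := v) (v := u) (w := w i)
      have h3 := hcomm u v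
      omega
    have hφinj : Function.Injective φ := by
      intro u v huv
      by_contra hne
      obtain ⟨w0, hw0, hres⟩ := hWres u v hne
      obtain ⟨i, rfl⟩ := hwsurj w0 hw0
      have hpos := hH.pos_dist_of_ne hne
      have heq : H.dist u (w i) = H.dist v (w i) := congrArg Fin.val (congrFun huv i)
      unfold stronglyResolves at hres
      have h3 := hcomm u v
      omega
    have hadjle1 : ∀ u v : V, H.Adj u v → H.dist u v ≤ 1 := by
      intro u v huv
      simpa using SimpleGraph.dist_le (SimpleGraph.Walk.cons huv SimpleGraph.Walk.nil)
    have hadjφ : ∀ u v, G.Adj u v → (strongPow (D + 1) n).Adj (φ u) (φ v) := by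
      intro u v huv
      refine ⟨fun h => huv.ne (hφinj h), fun i => ?_⟩
      have h1 := htri u v i
      have h2 := hadjle1 u v (hle huv)
      show ((H.dist u (w i) : ℤ) - (H.dist v (w i) : ℤ)).natAbs ≤ 1
      omega
    set H' := SimpleGraph.comap φ (strongPow (D + 1) n) with hH'def
    have hle2 : H ≤ H' := by
      intro a b hab
      refine ⟨fun h => hab.ne (hφinj h), fun i => ?_⟩
      have h1 := htri a b i
      have h2 := hadjle1 a b hab
      show ((H.dist a (w i) : ℤ) - (H.dist b (w i) : ℤ)).natAbs ≤ 1
      omega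
    have hH' : H'.Connected := hH.mono hle2
    have hH'le : ∀ x y : V, H'.dist x y ≤ H.dist x y := by
      intro x y
      exact ENat.toNat_le_toNat (SimpleGraph.edist_anti hle2)
        (SimpleGraph.edist_ne_top_iff_reachable.mpr (hH x y))
    have hup : ∀ x y : V, (strongPow (D + 1) n).dist (φ x) (φ y) ≤ H'.dist x y := by
      intro x y
      obtain ⟨p, hp⟩ := hH'.exists_walk_length_eq_dist x y
      have := SimpleGraph.dist_le (p.map (⟨φ, fun h => h⟩ : H' →g strongPow (D + 1) n))
      rwa [SimpleGraph.Walk.length_map, hp] at this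
    have hkey : ∀ x y : V, H.dist x y ≤ (strongPow (D + 1) n).dist (φ x) (φ y) := by
      intro x y
      by_cases hxy : x = y
      · subst hxy; simp [SimpleGraph.dist_self]
      · obtain ⟨w0, hw0, hres⟩ := hWres x y hxy
        obtain ⟨i, rfl⟩ := hwsurj w0 hw0
        have hc : ((H.dist x (w i) : ℤ) - (H.dist y (w i) : ℤ)).natAbs
            ≤ (strongPow (D + 1) n).dist (φ x) (φ y) :=
          coord_le_strongPow_dist (D + 1) n (φ x) (φ y) i
        unfold stronglyResolves at hres
        have h3 := hcomm x y
        omega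
    have hiso' : ∀ x y : V, H.dist x y = (strongPow (D + 1) n).dist (φ x) (φ y) :=
      fun x y => le_antisymm (hkey x y) (le_trans (hup x y) (hH'le x y))
    have hHH' : ∀ x y : V, H'.dist x y = H.dist x y := by
      intro x y
      refine le_antisymm (hH'le x y) ?_
      calc H.dist x y = (strongPow (D + 1) n).dist (φ x) (φ y) := hiso' x y
        _ ≤ H'.dist x y := hup x y
    refine ⟨w, hwinj, φ, ⟨hφinj, hadjφ, fun x i => ?_⟩, fun x y => ?_⟩
    · show H.dist x (w i) = H'.dist x (w i)
      exact (hHH' x (w i)).symm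
    · exact (hHH' x y).trans (hiso' x y)
  · rintro ⟨w, hwinj, φ, ⟨hφinj, hφadj, hφdist⟩, hiso⟩
    set H := SimpleGraph.comap φ (strongPow (D + 1) n) with hHdef
    have hle : G ≤ H := fun {a b} hab => hφadj a b hab
    have hHc : H.Connected := hG.mono hle
    refine ⟨H, hle, Finset.univ.image w, ?_, ?_⟩
    · rw [Finset.card_image_of_injective _ hwinj, Finset.card_univ, Fintype.card_fin]
    · intro u v huv
      rcases Nat.eq_zero_or_pos n with h0 | h0
      · exact absurd (hφinj (funext fun i => absurd i.isLt (by omega))) huv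
      · have hiuniv : (Finset.univ : Finset (Fin n)).Nonempty :=
          ⟨⟨0, h0⟩, Finset.mem_univ _⟩
        obtain ⟨i, -, hi⟩ := Finset.exists_mem_eq_sup Finset.univ hiuniv
          (fun i => ((φ u i : ℤ) - (φ v i : ℤ)).natAbs)
        have hsup : H.dist u v ≤ ((φ u i : ℤ) - (φ v i : ℤ)).natAbs := by
          rw [hiso u v]
          calc (strongPow (D + 1) n).dist (φ u) (φ v)
              ≤ Finset.univ.sup (fun i => ((φ u i : ℤ) - (φ v i : ℤ)).natAbs) :=
                strongPow_dist_le _ _ _ _ _ (fun j => Finset.le_sup (f := fun i => ((φ u i : ℤ) - (φ v i : ℤ)).natAbs) (Finset.mem_univ j))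
            _ = _ := hi
        have e1 : ((φ u i : ℕ)) = H.dist u (w i) := hφdist u i
        have e2 : ((φ v i : ℕ)) = H.dist v (w i) := hφdist v i
        have t1 := hHc.dist_triangle (u := u) (v := v) (w := w i)
        have t2 := hHc.dist_triangle (u := v) (v := u) (w := w i)
        have hcm : H.dist u v = H.dist v u := SimpleGraph.dist_comm
        refine ⟨w i, by simp, ?_⟩
        unfold stronglyResolves
        omega
end

section
/- If G is a connected graph with metric dimension 2 and metric basis W = {w_1, w_2}, then each of w_1 and w_2 has degree at most 3 in G. -/
open SimpleGraph

lemma deg_aux {V : Type*} [Fintype V] (G : SimpleGraph V) (hG : G.Connected)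
    (a b : V) (hbasis : isResolvingSet G {a, b}) :
    (G.neighborSet a).ncard ≤ 3 := by
  have hmem : ∀ u ∈ G.neighborSet a,
      G.dist u b ∈ ({G.dist a b - 1, G.dist a b, G.dist a b + 1} : Set ℕ) := by
    intro u hu
    have h1 : G.dist u a = 1 := (G.dist_eq_one_iff_adj).2 (G.adj_symm hu)
    have t1 : G.dist u b ≤ G.dist u a + G.dist a b := hG.dist_triangle
    have t2 : G.dist a b ≤ G.dist a u + G.dist u b := hG.dist_triangle
    have h1' : G.dist a u = 1 := by rw [G.dist_comm]; exact h1
    simp only [Set.mem_insert_iff, Set.mem_singleton_iff]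
    omega
  have hinj : Set.InjOn (fun u => G.dist u b) (G.neighborSet a) := by
    intro u hu v hv huv
    by_contra hne
    obtain ⟨w, hw, hdw⟩ := hbasis u v hne
    have h1 : G.dist u a = 1 := (G.dist_eq_one_iff_adj).2 (G.adj_symm hu)
    have h2 : G.dist v a = 1 := (G.dist_eq_one_iff_adj).2 (G.adj_symm hv)
    rcases hw with rfl | rfl
    · exact hdw (h1.trans h2.symm)
    · exact hdw huv
  calc (G.neighborSet a).ncard
      ≤ ({G.dist a b - 1, G.dist a b, G.dist a b + 1} : Set ℕ).ncard :=
        Set.ncard_le_ncard_of_injOn _ hmem hinj (Set.toFinite _)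
    _ ≤ 3 := by
        have h1 := Set.ncard_insert_le (G.dist a b - 1) ({G.dist a b, G.dist a b + 1} : Set ℕ)
        have h2 := Set.ncard_insert_le (G.dist a b) ({G.dist a b + 1} : Set ℕ)
        have h3 : ({G.dist a b + 1} : Set ℕ).ncard = 1 := Set.ncard_singleton _
        omega

/-- In a connected graph of metric dimension 2 with metric basis `{w₁, w₂}`,
both basis vertices have degree at most 3. -/
theorem metricBasis_degree_le_three {V : Type*} [Fintype V]
    (G : SimpleGraph V) (hG : G.Connected) (w₁ w₂ : V) (hne : w₁ ≠ w₂)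
    (hdim : metricDim V G = 2) (hbasis : isResolvingSet G {w₁, w₂}) :
    (G.neighborSet w₁).ncard ≤ 3 ∧ (G.neighborSet w₂).ncard ≤ 3 := by
  refine ⟨deg_aux G hG w₁ w₂ hbasis, deg_aux G hG w₂ w₁ ?_⟩
  rwa [Set.pair_comm]
end

section
/- If G is a connected graph with metric dimension 2 and metric basis W = {w_1, w_2}, then there is a unique shortest w_1–w_2 path in G, and every vertex on that path has degree at most 5. -/
open SimpleGraph

section Aux

variable {V : Type*} {G : SimpleGraph V}

private lemma exists_walk_to_getVert {u v : V} (p : G.Walk u v) (i : ℕ) :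
    ∃ q : G.Walk u (p.getVert i), q.length ≤ i := by
  induction p generalizing i with
  | nil =>
    refine ⟨SimpleGraph.Walk.nil.copy rfl ?_, by simp⟩
    exact (SimpleGraph.Walk.getVert_of_length_le _ (by simp)).symm
  | cons h p ih =>
    cases i with
    | zero =>
      refine ⟨SimpleGraph.Walk.nil.copy rfl ?_, by simp⟩
      exact (SimpleGraph.Walk.getVert_zero _).symm
    | succ j =>
      obtain ⟨q, hq⟩ := ih j
      exact ⟨SimpleGraph.Walk.cons h q, by simpa using Nat.succ_le_succ hq⟩

private lemma dist_getVert_le {u v : V} (p : G.Walk u v) (i : ℕ) :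
    G.dist u (p.getVert i) ≤ i := by
  obtain ⟨q, hq⟩ := exists_walk_to_getVert p i
  exact le_trans (SimpleGraph.dist_le q) hq

private lemma getVert_dist_le {u v : V} (p : G.Walk u v) (i : ℕ) (hi : i ≤ p.length) :
    G.dist (p.getVert i) v ≤ p.length - i := by
  have h1 := dist_getVert_le p.reverse (p.length - i)
  rw [SimpleGraph.Walk.getVert_reverse] at h1
  have h2 : p.length - (p.length - i) = i := by omega
  rw [h2] at h1
  rwa [SimpleGraph.dist_comm]

private lemma shortest_getVert_dists (hG : G.Connected) {u v : V} (p : G.Walk u v)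
    (hlen : p.length = G.dist u v) (i : ℕ) (hi : i ≤ p.length) :
    G.dist u (p.getVert i) = i ∧ G.dist (p.getVert i) v = p.length - i := by
  have h1 := dist_getVert_le p i
  have h2 := getVert_dist_le p i hi
  have h3 := hG.dist_triangle (u := u) (v := p.getVert i) (w := v)
  omega

private lemma walk_eq_of_getVert {u v : V} (p q : G.Walk u v)
    (hl : p.length = q.length) (h : ∀ i, p.getVert i = q.getVert i) : p = q := by
  induction p with
  | nil =>
    cases q with
    | nil => rfl
    | cons h' q' => simp at hl
  | @cons x y z ha p' ih =>
    cases q with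
    | nil => simp at hl
    | @cons _ y' _ hb q' =>
      have hbc : y = y' := by
        have := h 1
        rwa [SimpleGraph.Walk.getVert_cons_succ, SimpleGraph.Walk.getVert_cons_succ,
          SimpleGraph.Walk.getVert_zero, SimpleGraph.Walk.getVert_zero] at this
      subst hbc
      have : p' = q' := ih q' (by simpa using hl)
        (fun i => by
          have := h (i + 1)
          rwa [SimpleGraph.Walk.getVert_cons_succ, SimpleGraph.Walk.getVert_cons_succ] at this)
      subst this
      rfl

end Aux

/-- In a connected graph of metric dimension 2 with metric basis `{w₁, w₂}`, there is a
unique shortest `w₁`–`w₂` path, and every vertex on it has degree at most 5. -/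
theorem metricBasis_unique_geodesic_degree_le_five {V : Type*} [Fintype V]
    (G : SimpleGraph V) (hG : G.Connected) (w₁ w₂ : V) (hne : w₁ ≠ w₂)
    (hdim : metricDim V G = 2) (hbasis : isResolvingSet G {w₁, w₂}) :
    (∃! p : G.Walk w₁ w₂, p.IsPath ∧ p.length = G.dist w₁ w₂) ∧
    ∀ p : G.Walk w₁ w₂, p.IsPath → p.length = G.dist w₁ w₂ →
      ∀ v ∈ p.support, (G.neighborSet v).ncard ≤ 5 := by
    classical
  set d := G.dist w₁ w₂ with hd
  -- the coordinate map is injective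
  have hinj : Function.Injective (fun x : V => (G.dist x w₁, G.dist x w₂)) := by
    intro x y hxy
    by_contra hxy'
    obtain ⟨w, hw, hdw⟩ := hbasis x y hxy'
    simp only [Set.mem_insert_iff, Set.mem_singleton_iff] at hw
    rcases hw with rfl | rfl
    · exact hdw (congrArg Prod.fst hxy)
    · exact hdw (congrArg Prod.snd hxy)
  constructor
  · obtain ⟨p, hp, hplen⟩ := hG.exists_path_of_dist w₁ w₂
    refine ⟨p, ⟨hp, hplen⟩, ?_⟩
    rintro q ⟨hq, hqlen⟩
    refine walk_eq_of_getVert q p (by rw [hqlen, hplen]) (fun i => ?_)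
    by_cases hi : i ≤ d
    · have h1 := shortest_getVert_dists hG q hqlen i (by omega)
      have h2 := shortest_getVert_dists hG p hplen i (by omega)
      apply hinj
      simp only [Prod.mk.injEq]
      rw [SimpleGraph.dist_comm (u := q.getVert i), SimpleGraph.dist_comm (u := p.getVert i)]
      constructor
      · rw [h1.1, h2.1]
      · rw [h1.2, h2.2, hqlen, hplen]
    · rw [SimpleGraph.Walk.getVert_of_length_le q (by omega),
        SimpleGraph.Walk.getVert_of_length_le p (by omega)]
  · intro p hp hplen v hv
    obtain ⟨i, hgi, hile⟩ := SimpleGraph.Walk.mem_support_iff_exists_getVert.mp hv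
    have hvd := shortest_getVert_dists hG p hplen i hile
    rw [hgi] at hvd
    set f : V → ℕ × ℕ := fun x => (G.dist x w₁, G.dist x w₂) with hf
    have hid : i ≤ d := by omega
    set S : Set (ℕ × ℕ) :=
      {(i - 1, d - i + 1), (i, d - i + 1), (i + 1, d - i - 1), (i + 1, d - i),
        (i + 1, d - i + 1)} with hS
    have hsub : f '' G.neighborSet v ⊆ S := by
      rintro ⟨a, b⟩ ⟨x, hx, hfx⟩
      have hadj : G.Adj v x := hx
      have hxv : x ≠ v := fun h => G.loopless.irrefl v (h ▸ hadj)
      have hdist1 : G.dist v x = 1 := SimpleGraph.dist_eq_one_iff_adj.mpr hadj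
      have ha : a = G.dist x w₁ := by
        have := congrArg Prod.fst hfx; simpa [hf] using this.symm
      have hb : b = G.dist x w₂ := by
        have := congrArg Prod.snd hfx; simpa [hf] using this.symm
      have ht1 : G.dist x w₁ ≤ G.dist x v + G.dist v w₁ := hG.dist_triangle
      have ht2 : G.dist v w₁ ≤ G.dist v x + G.dist x w₁ := hG.dist_triangle
      have ht3 : G.dist x w₂ ≤ G.dist x v + G.dist v w₂ := hG.dist_triangle
      have ht4 : G.dist v w₂ ≤ G.dist v x + G.dist x w₂ := hG.dist_triangle
      have ht5 : G.dist w₁ w₂ ≤ G.dist w₁ x + G.dist x w₂ := hG.dist_triangle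
      have hxv1 : G.dist x v = 1 := by rwa [SimpleGraph.dist_comm] at hdist1
      have hvw1 : G.dist v w₁ = i := by rw [SimpleGraph.dist_comm]; exact hvd.1
      have hvw2 : G.dist v w₂ = p.length - i := hvd.2
      have hw1x : G.dist w₁ x = G.dist x w₁ := SimpleGraph.dist_comm ..
      have hfne : f x ≠ f v := fun h => hxv (hinj h)
      have hfv : f v = (i, d - i) := by
        simp only [hf, Prod.mk.injEq]
        exact ⟨hvw1, by rw [hvw2, hplen]⟩
      have hne2 : ¬(a = i ∧ b = d - i) := by
        intro ⟨h1, h2⟩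
        apply hfne
        rw [hfv, hf]
        simp only [Prod.mk.injEq]
        exact ⟨by rw [← ha, h1], by rw [← hb, h2]⟩
      have hplen' : p.length = d := hplen
      simp only [hS, Set.mem_insert_iff, Set.mem_singleton_iff, Prod.mk.injEq]
      omega
    have hcard : (G.neighborSet v).ncard = (f '' G.neighborSet v).ncard :=
      (Set.ncard_image_of_injective _ hinj).symm
    have hSfin : S.Finite := Set.toFinite S
    have hS5 : S.ncard ≤ 5 := by
      rw [hS]
      refine le_trans (Set.ncard_insert_le _ _) ?_
      refine le_trans (Nat.add_le_add_right (Set.ncard_insert_le _ _) 1) ?_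
      refine le_trans (Nat.add_le_add_right (Nat.add_le_add_right
        (Set.ncard_insert_le _ _) 1) 1) ?_
      refine le_trans (Nat.add_le_add_right (Nat.add_le_add_right (Nat.add_le_add_right
        (Set.ncard_insert_le _ _) 1) 1) 1) ?_
      have : ({(i + 1, d - i + 1)} : Set (ℕ × ℕ)).ncard = 1 := Set.ncard_singleton _
      omega
    calc (G.neighborSet v).ncard = (f '' G.neighborSet v).ncard := hcard
      _ ≤ S.ncard := Set.ncard_le_ncard hsub hSfin
      _ ≤ 5 := hS5
end

section
/- If G is a connected graph with metric dimension 2 and metric basis {w_1, w_2}, then for j = 1,2 and for every 0 ≤ i ≤ e(w_j), the subgraph of G induced by the set N_i(w_j) of vertices at distance exactly i from w_j is a disjoint union of paths, and |N_i(w_j)| ≤ 2i + 1. -/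
open SimpleGraph

/-- The path graph on `ℤ`. -/
def zpathAux : SimpleGraph ℤ where
  Adj a b := a = b + 1 ∨ b = a + 1
  symm := ⟨fun _ _ h => h.symm⟩
  loopless := ⟨fun a h => by omega⟩

lemma zpathAux_mem_support {b c : ℤ} (p : zpathAux.Walk b c) :
    ∀ x : ℤ, min b c ≤ x → x ≤ max b c → x ∈ p.support := by
  induction p with
  | nil => intro x h1 h2; simp only [Walk.support_nil, List.mem_singleton]; omega
  | @cons u v c h q ih =>
    intro x h1 h2
    rw [Walk.support_cons, List.mem_cons]
    by_cases hx : x = u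
    · exact Or.inl hx
    · refine Or.inr (ih x ?_ ?_) <;> rcases (show _ ∨ _ from h) with h | h <;> omega

lemma zpathAux_path_length {b c : ℤ} (p : zpathAux.Walk b c) (hp : p.IsPath) :
    p.length = (b - c).natAbs := by
  induction p with
  | nil => simp
  | @cons u v c h q ih =>
    rw [Walk.cons_isPath_iff] at hp
    have hq := ih hp.1
    have hns : ¬ (min v c ≤ u ∧ u ≤ max v c) := by
      intro hc
      exact hp.2 (zpathAux_mem_support q u hc.1 hc.2)
    rw [Walk.length_cons]
    rcases (show _ ∨ _ from h) with h | h <;> omega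

lemma zpathAux_isAcyclic : zpathAux.IsAcyclic := by
  intro v p hp
  cases p with
  | nil => exact hp.not_nil Walk.nil_nil
  | cons h q =>
    have h3 := hp.three_le_length
    rw [Walk.cons_isCycle_iff] at hp
    have hl := zpathAux_path_length q hp.1
    rw [Walk.length_cons] at h3
    rcases (show _ ∨ _ from h) with h | h <;> omega

/-- In a connected graph of metric dimension 2 with metric basis `{w₁, w₂}`, each distance
level `N_i(w_j)` induces a disjoint union of paths (max degree ≤ 2 and acyclic) and has at
most `2i + 1` vertices. -/
theorem metricBasis_level_sets_union_of_paths {V : Type*} [Fintype V]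
    (G : SimpleGraph V) (hG : G.Connected) (w₁ w₂ : V) (hne : w₁ ≠ w₂)
    (hdim : metricDim V G = 2) (hbasis : isResolvingSet G {w₁, w₂}) :
    ∀ w : V, (w = w₁ ∨ w = w₂) → ∀ i : ℕ,
      (∀ v : {v : V // v ∈ {x | G.dist w x = i}},
        ((G.induce {x | G.dist w x = i}).neighborSet v).ncard ≤ 2) ∧
      (G.induce {x | G.dist w x = i}).IsAcyclic ∧
      {x | G.dist w x = i}.ncard ≤ 2 * i + 1 := by
  intro w hw i
  classical
  set ow := if w = w₁ then w₂ else w₁ with how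
  have how' : (w = w₁ ∧ ow = w₂) ∨ (w = w₂ ∧ ow = w₁) := by
    rcases hw with h | h <;> simp [how, h, hne, hne.symm]
  have hkey : ∀ x y : V, G.dist w x = i → G.dist w y = i → x ≠ y →
      G.dist x ow ≠ G.dist y ow := by
    intro x y hx hy hxy hcon
    obtain ⟨w', hw', hd⟩ := hbasis x y hxy
    have hw'' : w' = w ∨ w' = ow := by
      rcases how' with ⟨h1, h2⟩ | ⟨h1, h2⟩ <;> rcases hw' with h | h <;> simp_all
    apply hd
    rcases hw'' with h | h
    · subst h
      rw [show G.dist x w' = G.dist w' x from SimpleGraph.dist_comm,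
        show G.dist y w' = G.dist w' y from SimpleGraph.dist_comm, hx, hy]
    · subst h; exact hcon
  have hadj : ∀ x y : V, G.dist w x = i → G.dist w y = i → G.Adj x y →
      (G.dist x ow = G.dist y ow + 1 ∨ G.dist y ow = G.dist x ow + 1) := by
    intro x y hx hy hxy
    have h1 : G.dist x ow ≤ G.dist x y + G.dist y ow := hG.dist_triangle
    have h2 : G.dist y ow ≤ G.dist y x + G.dist x ow := hG.dist_triangle
    have h3 : G.dist x y ≤ 1 := by simpa using SimpleGraph.dist_le hxy.toWalk
    have h4 : G.dist y x ≤ 1 := by simpa using SimpleGraph.dist_le hxy.symm.toWalk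
    have h5 := hkey x y hx hy hxy.ne
    omega
  refine ⟨?_, ?_, ?_⟩
  · -- degree bound
    intro v
    have hinj : Set.InjOn (fun u : {v : V // v ∈ {x | G.dist w x = i}} => G.dist (u : V) ow)
        ((G.induce {x | G.dist w x = i}).neighborSet v) := by
      intro a _ b _ hab
      by_contra hne'
      exact hkey a b a.2 b.2 (fun h => hne' (Subtype.ext h)) hab
    rw [← Set.ncard_image_of_injOn hinj]
    have hsub : (fun u : {v : V // v ∈ {x | G.dist w x = i}} => G.dist (u : V) ow) ''
        ((G.induce {x | G.dist w x = i}).neighborSet v)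
        ⊆ {G.dist (v : V) ow + 1, G.dist (v : V) ow - 1} := by
      rintro _ ⟨u, hu, rfl⟩
      have hadj' : G.Adj (v : V) (u : V) := hu
      have := hadj (v : V) (u : V) v.2 u.2 hadj'
      simp only [Set.mem_insert_iff, Set.mem_singleton_iff]
      omega
    calc _ ≤ ({G.dist (v : V) ow + 1, G.dist (v : V) ow - 1} : Set ℕ).ncard :=
          Set.ncard_le_ncard hsub ((Set.finite_singleton _).insert _)
      _ ≤ ({G.dist (v : V) ow - 1} : Set ℕ).ncard + 1 := Set.ncard_insert_le _ _
      _ ≤ 2 := by rw [Set.ncard_singleton]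
  · -- acyclicity
    have gadj : ∀ {a b : {v : V // v ∈ {x | G.dist w x = i}}},
        (G.induce {x | G.dist w x = i}).Adj a b →
        zpathAux.Adj ((G.dist (a : V) ow : ℤ)) ((G.dist (b : V) ow : ℤ)) := by
      intro a b hab
      have hab' : G.Adj (a : V) (b : V) := hab
      have := hadj (a : V) (b : V) a.2 b.2 hab'
      rcases this with h | h
      · show _ ∨ _; left; exact_mod_cast h
      · show _ ∨ _; right; exact_mod_cast h
    let g : (G.induce {x | G.dist w x = i}) →g zpathAux :=
      ⟨fun u => (G.dist (u : V) ow : ℤ), gadj⟩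
    have ginj : Function.Injective g := by
      intro a b hab
      by_contra hne'
      exact hkey a b a.2 b.2 (fun h => hne' (Subtype.ext h)) (by exact_mod_cast (show ((G.dist (a : V) ow : ℤ)) = ((G.dist (b : V) ow : ℤ)) from hab))
    intro v p hp
    exact zpathAux_isAcyclic (p.map g) (hp.map ginj)
  · -- cardinality bound
    have hinj2 : Set.InjOn (fun x => G.dist x ow) {x | G.dist w x = i} := by
      intro a ha b hb hab
      by_contra hne'
      exact hkey a b ha hb hne' hab
    rw [← Set.ncard_image_of_injOn hinj2]
    have hsub : (fun x => G.dist x ow) '' {x | G.dist w x = i}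
        ⊆ Set.Icc (G.dist w ow - i) (G.dist w ow + i) := by
      rintro _ ⟨x, hx, rfl⟩
      have hx' : G.dist w x = i := hx
      have t1 : G.dist w ow ≤ G.dist w x + G.dist x ow := hG.dist_triangle
      have t2 : G.dist x ow ≤ G.dist x w + G.dist w ow := hG.dist_triangle
      have t3 : G.dist x w = G.dist w x := SimpleGraph.dist_comm
      simp only [Set.mem_Icc]
      omega
    calc _ ≤ (Set.Icc (G.dist w ow - i) (G.dist w ow + i)).ncard :=
          Set.ncard_le_ncard hsub (Set.finite_Icc _ _)
      _ = (Finset.Icc (G.dist w ow - i) (G.dist w ow + i)).card := by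
          rw [← Finset.coe_Icc, Set.ncard_coe_finset]
      _ ≤ 2 * i + 1 := by rw [Nat.card_Icc]; omega
end

section
/- If G is a connected graph with metric dimension 2 and metric basis {w_1, w_2}, then every vertex v at distance i from w_j (j = 1 or 2) is adjacent to at most three vertices at distance i+1 from w_j and to at most three vertices at distance i−1 from w_j. -/
open SimpleGraph

lemma neighbours_level_aux {V : Type*} [Fintype V] (G : SimpleGraph V) (hG : G.Connected)
    (w w' v : V)
    (hres : ∀ x y : V, x ≠ y → G.dist w x = G.dist w y → G.dist w' x ≠ G.dist w' y)
    (S : Set V) (hadj : ∀ x ∈ S, G.Adj v x) (j : ℕ) (hj : ∀ x ∈ S, G.dist w x = j) :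
    S.ncard ≤ 3 := by
  set d := G.dist w' v with hd
  have hinj : Set.InjOn (fun x => G.dist w' x) S := by
    intro x hx y hy hxy
    by_contra hne
    exact hres x y hne ((hj x hx).trans (hj y hy).symm) hxy
  have hsub : (fun x => G.dist w' x) '' S ⊆ {d - 1, d, d + 1} := by
    rintro _ ⟨x, hx, rfl⟩
    have h1 : G.dist v x = 1 := (dist_eq_one_iff_adj).2 (hadj x hx)
    have h2 : G.dist w' x ≤ G.dist w' v + G.dist v x := hG.dist_triangle
    have h3 : G.dist w' v ≤ G.dist w' x + G.dist x v := hG.dist_triangle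
    rw [SimpleGraph.dist_comm (u := x) (v := v)] at h3
    simp only [Set.mem_insert_iff, Set.mem_singleton_iff]
    omega
  calc S.ncard = ((fun x => G.dist w' x) '' S).ncard := (Set.ncard_image_of_injOn hinj).symm
    _ ≤ ({d - 1, d, d + 1} : Set ℕ).ncard := Set.ncard_le_ncard hsub (Set.toFinite _)
    _ ≤ 3 := by
        have h1 := Set.ncard_insert_le (d-1) ({d, d+1} : Set ℕ)
        have h2 := Set.ncard_insert_le d ({d+1} : Set ℕ)
        have h3 : ({d+1} : Set ℕ).ncard = 1 := Set.ncard_singleton _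
        omega


/-- In a connected graph of metric dimension 2 with metric basis `{w₁, w₂}`, every vertex at
distance `i` from a basis vertex has at most three neighbours at distance `i+1` and at most
three neighbours at distance `i-1` from that basis vertex. -/
theorem metricBasis_neighbours_between_levels {V : Type*} [Fintype V]
    (G : SimpleGraph V) (hG : G.Connected) (w₁ w₂ : V) (hne : w₁ ≠ w₂)
    (hdim : metricDim V G = 2) (hbasis : isResolvingSet G {w₁, w₂}) :
    ∀ w : V, (w = w₁ ∨ w = w₂) → ∀ (v : V) (i : ℕ), G.dist w v = i →
      {x | G.Adj v x ∧ G.dist w x = i + 1}.ncard ≤ 3 ∧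
      (1 ≤ i → {x | G.Adj v x ∧ G.dist w x = i - 1}.ncard ≤ 3) := by
  classical
  intro w hw v i hi
  obtain ⟨w', hw'⟩ : ∃ w', ∀ x y : V, x ≠ y → G.dist w x = G.dist w y →
      G.dist w' x ≠ G.dist w' y := by
    refine ⟨if w = w₁ then w₂ else w₁, fun x y hxy heq => ?_⟩
    obtain ⟨u, hu, hdist⟩ := hbasis x y hxy
    rw [SimpleGraph.dist_comm (u := x) (v := u), SimpleGraph.dist_comm (u := y) (v := u)] at hdist
    rcases hu with rfl | rfl <;> rcases hw with rfl | rfl <;>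
      simp_all
  constructor
  · exact neighbours_level_aux G hG w w' v hw'
      _ (fun x hx => hx.1) (i + 1) (fun x hx => hx.2)
  · intro _
    exact neighbours_level_aux G hG w w' v hw'
      _ (fun x hx => hx.1) (i - 1) (fun x hx => hx.2)
end

section
/- Let G be a connected graph whose strong resolving graph G_SR has vertex covering number 2, and let {w_1, w_2} be a vertex cover of G_SR. Then w_1 and w_2 have at most one common neighbour in G_SR. -/
open SimpleGraph

section Aux
variable {V : Type*} [Fintype V] {G : SimpleGraph V}

lemma aux_dist_lt_card (hG : G.Connected) (u v : V) [Nonempty V] :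
    G.dist u v < Fintype.card V := by
  obtain ⟨p, hp, hl⟩ := hG.exists_path_of_dist u v
  exact hl ▸ hp.length_lt

lemma aux_dist_adj (hG : G.Connected) {x v : V} (h : G.Adj x v) (u : V) :
    G.dist u v ≤ G.dist u x + 1 := by
  calc G.dist u v ≤ G.dist u x + G.dist x v := hG.dist_triangle
    _ ≤ G.dist u x + 1 := by
        have := G.dist_le (h.toWalk)
        simp at this; omega

/-- Extension lemma: some `v'` maximally distant from `u` with additive distances. -/
lemma aux_extend (hG : G.Connected) (u v : V) :
    ∃ v', (∀ x, G.Adj v' x → G.dist u x ≤ G.dist u v') ∧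
      G.dist u v' = G.dist u v + G.dist v v' := by
  have : Nonempty V := ⟨u⟩
  obtain ⟨n, hn⟩ : ∃ n, Fintype.card V - G.dist u v ≤ n := ⟨_, le_rfl⟩
  induction n generalizing v with
  | zero => exact absurd (aux_dist_lt_card hG u v) (by omega)
  | succ n ih =>
    by_cases hmd : ∀ x, G.Adj v x → G.dist u x ≤ G.dist u v
    · exact ⟨v, hmd, by simp⟩
    · push_neg at hmd
      obtain ⟨x, hadj, hx⟩ := hmd
      have hx1 : G.dist u x = G.dist u v + 1 := by
        have := aux_dist_adj hG hadj u
        omega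
      have hltx := aux_dist_lt_card hG u x
      obtain ⟨v', h1, h2⟩ := ih x (by omega)
      refine ⟨v', h1, ?_⟩
      have t1 : G.dist u v' ≤ G.dist u v + G.dist v v' := hG.dist_triangle
      have t2 : G.dist v v' ≤ 1 + G.dist x v' := by
        calc G.dist v v' ≤ G.dist v x + G.dist x v' := hG.dist_triangle
          _ ≤ 1 + G.dist x v' := by
              have := G.dist_le hadj.toWalk; simp at this; omega
      omega

lemma aux_first (hG : G.Connected) {u v : V} (h : u ≠ v) :
    ∃ x, G.Adj u x ∧ G.dist x v + 1 = G.dist u v := by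
  obtain ⟨p, hl⟩ := hG.exists_walk_length_eq_dist u v
  match p, hl with
  | .nil, hl => exact absurd rfl h
  | .cons (v := y) hadj q, hl =>
    refine ⟨y, hadj, ?_⟩
    have h1 : G.dist y v ≤ q.length := G.dist_le q
    have h2 : G.dist u v ≤ 1 + G.dist y v := by
      calc G.dist u v ≤ G.dist u y + G.dist y v := hG.dist_triangle
        _ ≤ 1 + G.dist y v := by
            have := G.dist_le hadj.toWalk; simp at this; omega
    simp only [SimpleGraph.Walk.length_cons] at hl
    omega

/-- Key: for any `u ≠ v` there are mutually maximally distant `u'`, `v'` with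
fully additive distances. -/
lemma aux_mmd (hG : G.Connected) {u v : V} (huv : u ≠ v) :
    ∃ u' v', (strongResolvingGraph G).Adj u' v' ∧
      G.dist u v' = G.dist u v + G.dist v v' ∧
      G.dist v u' = G.dist v u + G.dist u u' := by
  obtain ⟨v', hv1, hv2⟩ := aux_extend hG u v
  obtain ⟨u', hu1, hu2⟩ := aux_extend hG v' u
  have cuv : G.dist u v = G.dist v u := G.dist_comm
  have cuv' : G.dist u v' = G.dist v' u := G.dist_comm
  have cu'v' : G.dist u' v' = G.dist v' u' := G.dist_comm
  have hpos : 0 < G.dist u v := hG.pos_dist_of_ne huv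
  -- u' ≠ v'
  have hne : u' ≠ v' := by
    intro h
    have h0 : G.dist v' u' = 0 := by
      rw [G.dist_eq_zero_iff_eq_or_not_reachable]; left; exact h.symm
    omega
  -- v' maximally distant from u'
  have hmd2 : ∀ x, G.Adj v' x → G.dist u' x ≤ G.dist u' v' := by
    intro x hx
    calc G.dist u' x ≤ G.dist u' u + G.dist u x := hG.dist_triangle
      _ ≤ G.dist u' u + G.dist u v' := by
          have := hv1 x hx; omega
      _ = G.dist u' v' := by
          have c1 : G.dist u' u = G.dist u u' := G.dist_comm
          omega
  refine ⟨u', v', ⟨hne, hmd2, hu1⟩, hv2, ?_⟩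
  have t1 : G.dist v u' ≤ G.dist v u + G.dist u u' := hG.dist_triangle
  have t2 : G.dist v' u' ≤ G.dist v' v + G.dist v u' := hG.dist_triangle
  have c2 : G.dist v' v = G.dist v v' := G.dist_comm
  omega

/-- Contradiction: `b` cannot lie strictly inside a shortest `a`–`w` path if `b`
is mutually maximally distant from `w`. -/
lemma aux_contra (hG : G.Connected) {w a b : V} (hab : a ≠ b)
    (hadj : (strongResolvingGraph G).Adj w b)
    (heq : G.dist a w = G.dist a b + G.dist b w) : False := by
  obtain ⟨x, hx, hxd⟩ := aux_first hG (Ne.symm hab)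
  have c0 : G.dist x a = G.dist a x := G.dist_comm
  have c3 : G.dist b a = G.dist a b := G.dist_comm
  have h1 : G.dist w x ≤ G.dist w b := hadj.2.1 x hx
  have t : G.dist a w ≤ G.dist a x + G.dist x w := hG.dist_triangle
  have c1 : G.dist x w = G.dist w x := G.dist_comm
  have c2 : G.dist b w = G.dist w b := G.dist_comm
  omega

end Aux

/-- If `{w₁, w₂}` is a vertex cover of the strong resolving graph of a connected graph `G`
with `α(G_SR) = 2`, then `w₁` and `w₂` have at most one common neighbour in `G_SR`. -/
theorem vertexCover_common_neighbours_le_one {V : Type*} [Fintype V]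
    (G : SimpleGraph V) (hG : G.Connected)
    (hcov : coverNumber V (strongResolvingGraph G) = 2)
    (w₁ w₂ : V) (hne : w₁ ≠ w₂)
    (hc : ∀ u v : V, (strongResolvingGraph G).Adj u v → u = w₁ ∨ u = w₂ ∨ v = w₁ ∨ v = w₂) :
    {v | (strongResolvingGraph G).Adj w₁ v ∧ (strongResolvingGraph G).Adj w₂ v}.ncard ≤ 1 := by
  by_contra h
  push_neg at h
  obtain ⟨u, v, hu, hv, huv⟩ := (Set.one_lt_ncard_iff (Set.toFinite _)).mp h
  obtain ⟨hu1, hu2⟩ := hu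
  obtain ⟨hv1, hv2⟩ := hv
  obtain ⟨u', v', hadj', e1, e2⟩ := aux_mmd hG huv
  have cuv : G.dist u v = G.dist v u := SimpleGraph.dist_comm
  rcases hc u' v' hadj' with h' | h' | h' | h'
  · subst h'
    exact aux_contra hG (Ne.symm huv) hu1 (by omega)
  · subst h'
    exact aux_contra hG (Ne.symm huv) hu2 (by omega)
  · subst h'
    exact aux_contra hG huv hv1 (by omega)
  · subst h'
    exact aux_contra hG huv hv2 (by omega)
end

section
/- If a connected graph G has strong dimension 2, then its strong resolving graph G_SR contains no subgraph isomorphic to K_{2,2}. -/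
open SimpleGraph

section AuxLemmas

variable {V : Type*}

/-- In a connected graph, if `u ≠ v` there is a neighbor of `u` one step closer to `v`. -/
lemma exists_adj_dist_aux (G : SimpleGraph V) (hG : G.Connected) {u v : V}
    (huv : u ≠ v) : ∃ x, G.Adj u x ∧ G.dist x v + 1 = G.dist u v := by
  have hd : G.dist u v ≠ 0 := fun h0 => huv (hG.dist_eq_zero_iff.mp h0)
  obtain ⟨p, hp⟩ := SimpleGraph.exists_walk_of_dist_ne_zero hd
  cases p with
  | nil => simp at hd
  | @cons _ x _ hadj q =>
    refine ⟨x, hadj, ?_⟩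
    rw [SimpleGraph.Walk.length_cons] at hp
    have hle : G.dist x v ≤ q.length := SimpleGraph.dist_le q
    have htri : G.dist u v ≤ G.dist u x + G.dist x v := hG.dist_triangle
    have h1 : G.dist u x = 1 := SimpleGraph.dist_eq_one_iff_adj.mpr hadj
    omega

/-- If `u` and `v` are mutually maximally distant, then no vertex `c ≠ v` can see `v`
on a geodesic towards `u`. -/
lemma key_lemma (G : SimpleGraph V) (hG : G.Connected) {u v c : V}
    (hm : mutuallyMaxDistant G u v) (hc : c ≠ v) :
    G.dist c u ≠ G.dist c v + G.dist v u := by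
  intro heq
  obtain ⟨x, hvx, hx⟩ := exists_adj_dist_aux G hG (Ne.symm hc : v ≠ c)
  have h1 : G.dist u x ≤ G.dist u v := hm.1 x hvx
  have h2 : G.dist c u ≤ G.dist c x + G.dist x u := hG.dist_triangle
  have e1 : G.dist c x = G.dist x c := SimpleGraph.dist_comm
  have e2 : G.dist x u = G.dist u x := SimpleGraph.dist_comm
  have e3 : G.dist c v = G.dist v c := SimpleGraph.dist_comm
  have e4 : G.dist v u = G.dist u v := SimpleGraph.dist_comm
  omega

/-- `mutuallyMaxDistant` is symmetric. -/
lemma mmd_symm (G : SimpleGraph V) {u v : V} (h : mutuallyMaxDistant G u v) :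
    mutuallyMaxDistant G v u := ⟨h.2, h.1⟩

end AuxLemmas

/-- If a connected graph has strong dimension 2, then its strong resolving graph contains
no subgraph isomorphic to `K_{2,2}`. -/
theorem strongDim_two_no_K22 {V : Type*} [Fintype V]
    (G : SimpleGraph V) (hG : G.Connected) (h : strongDim V G = 2) :
    ¬ ∃ f : completeBipartiteGraph (Fin 2) (Fin 2) →g strongResolvingGraph G,
        Function.Injective f := by
  classical
  rintro ⟨f, hf⟩
  -- Extract a strong resolving set of size 2.
  have hne : {n | ∃ W : Finset V, W.card = n ∧ isStrongResolvingSet G ↑W}.Nonempty := by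
    refine ⟨Finset.univ.card, Finset.univ, rfl, fun u v huv => ⟨v, by simp, Or.inl ?_⟩⟩
    simp [SimpleGraph.dist_self]
  have h2 : 2 ∈ {n | ∃ W : Finset V, W.card = n ∧ isStrongResolvingSet G ↑W} := by
    rw [strongDim] at h
    exact h ▸ Nat.sInf_mem hne
  obtain ⟨W, hWcard, hWres⟩ := h2
  -- The four vertices of the K_{2,2}.
  set a := f (Sum.inl 0) with ha
  set b := f (Sum.inl 1) with hb
  set c := f (Sum.inr 0) with hc
  set d := f (Sum.inr 1) with hd
  have hac : (strongResolvingGraph G).Adj a c := f.map_adj (by simp [completeBipartiteGraph])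
  have had : (strongResolvingGraph G).Adj a d := f.map_adj (by simp [completeBipartiteGraph])
  have hbc : (strongResolvingGraph G).Adj b c := f.map_adj (by simp [completeBipartiteGraph])
  have hbd : (strongResolvingGraph G).Adj b d := f.map_adj (by simp [completeBipartiteGraph])
  have hab_ne : a ≠ b := fun e => by simpa using hf e
  have hcd_ne : c ≠ d := fun e => by simpa using hf e
  -- A strong resolving set covers each edge of the strong resolving graph.
  have cover : ∀ u v, (strongResolvingGraph G).Adj u v → u ∈ W ∨ v ∈ W := by
    intro u v huv
    obtain ⟨w, hwW, hw⟩ := hWres u v huv.1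
    rcases hw with h1 | h1
    · right
      have hwv : w = v := by
        by_contra hwv
        exact key_lemma G hG huv.2 hwv (by
          have e1 : G.dist w u = G.dist u w := SimpleGraph.dist_comm
          have e2 : G.dist w v = G.dist v w := SimpleGraph.dist_comm
          have e3 : G.dist v u = G.dist u v := SimpleGraph.dist_comm
          omega)
      exact hwv ▸ hwW
    · left
      have hwu : w = u := by
        by_contra hwu
        exact key_lemma G hG (mmd_symm G huv.2) hwu (by
          have e1 : G.dist w v = G.dist v w := SimpleGraph.dist_comm
          have e2 : G.dist w u = G.dist u w := SimpleGraph.dist_comm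
          have e3 : G.dist u v = G.dist v u := SimpleGraph.dist_comm
          omega)
      exact hwu ▸ hwW
  -- The resolver of the pair (a,b) cannot be c or d.
  obtain ⟨wab, hwabW, hwab⟩ := hWres a b hab_ne
  have hwab_c : wab ≠ c := by
    rintro rfl
    rcases hwab with h1 | h1
    · exact key_lemma G hG (mmd_symm G hbc.2) hab_ne h1
    · exact key_lemma G hG (mmd_symm G hac.2) (Ne.symm hab_ne) h1
  have hwab_d : wab ≠ d := by
    rintro rfl
    rcases hwab with h1 | h1
    · exact key_lemma G hG (mmd_symm G hbd.2) hab_ne h1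
    · exact key_lemma G hG (mmd_symm G had.2) (Ne.symm hab_ne) h1
  -- The resolver of the pair (c,d) cannot be a or b.
  obtain ⟨wcd, hwcdW, hwcd⟩ := hWres c d hcd_ne
  have hwcd_a : wcd ≠ a := by
    rintro rfl
    rcases hwcd with h1 | h1
    · exact key_lemma G hG had.2 hcd_ne h1
    · exact key_lemma G hG hac.2 (Ne.symm hcd_ne) h1
  have hwcd_b : wcd ≠ b := by
    rintro rfl
    rcases hwcd with h1 | h1
    · exact key_lemma G hG hbd.2 hcd_ne h1
    · exact key_lemma G hG hbc.2 (Ne.symm hcd_ne) h1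
  -- Case analysis on the 2-element cover.
  by_cases hcdW : c ∈ W ∧ d ∈ W
  · have hsub : ({c, d} : Finset V) ⊆ W := by
      intro x hx
      rcases Finset.mem_insert.mp hx with rfl | hx
      · exact hcdW.1
      · exact (Finset.mem_singleton.mp hx) ▸ hcdW.2
    have hWeq : ({c, d} : Finset V) = W :=
      Finset.eq_of_subset_of_card_le hsub (by rw [hWcard, Finset.card_pair hcd_ne])
    rw [← hWeq] at hwabW
    rcases Finset.mem_insert.mp hwabW with rfl | hx
    · exact hwab_c rfl
    · exact hwab_d (Finset.mem_singleton.mp hx)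
  · have haW : a ∈ W := by
      by_contra haW
      rcases cover a c hac with h' | h'
      · exact haW h'
      rcases cover a d had with h'' | h''
      · exact haW h''
      exact hcdW ⟨h', h''⟩
    have hbW : b ∈ W := by
      by_contra hbW
      rcases cover b c hbc with h' | h'
      · exact hbW h'
      rcases cover b d hbd with h'' | h''
      · exact hbW h''
      exact hcdW ⟨h', h''⟩
    have hsub : ({a, b} : Finset V) ⊆ W := by
      intro x hx
      rcases Finset.mem_insert.mp hx with rfl | hx
      · exact haW
      · exact (Finset.mem_singleton.mp hx) ▸ hbW
    have hWeq : ({a, b} : Finset V) = W :=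
      Finset.eq_of_subset_of_card_le hsub (by rw [hWcard, Finset.card_pair hab_ne])
    rw [← hWeq] at hwcdW
    rcases Finset.mem_insert.mp hwcdW with rfl | hx
    · exact hwcd_a rfl
    · exact hwcd_b (Finset.mem_singleton.mp hx)
end

section
/- Let G be a non-complete connected graph with chromatic number k and color classes V_1,...,V_k in a proper k-coloring with |V_1| ≤ ... ≤ |V_k|. If there exists ℓ ≥ 1 such that |V_i| = 1 for 1 ≤ i ≤ ℓ and |V_i| > 1 for ℓ < i ≤ k, then the threshold strong dimension satisfies τ_s(G) ≤ ℓ − 1 + Σ_{i=ℓ+1}^{k} ⌈log_2 |V_i|⌉. -/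
open SimpleGraph

lemma key_lemma_s12 {V : Type*} [Fintype V] (G : SimpleGraph V)
    {J : Type*} [Fintype J] (φ : V → J → ℕ) (w : J → V) (x₀ : V)
    (h2 : ∀ v j, φ v j ≤ 2)
    (hadj : ∀ u v, G.Adj u v → ∀ j, φ u j ≤ φ v j + 1 ∧ φ v j ≤ φ u j + 1)
    (hinj : Function.Injective φ)
    (hw0 : ∀ j, φ (w j) j = 0)
    (hw1 : ∀ j j', j ≠ j' → φ (w j) j' = 1)
    (huniq : ∀ x j, φ x j = 0 → x = w j)
    (hx0 : ∀ j, φ x₀ j = 1) :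
    thresholdStrongDim V G ≤ Fintype.card J := by
  classical
  set H : SimpleGraph V :=
    { Adj := fun u v => u ≠ v ∧ ∀ j, φ u j ≤ φ v j + 1 ∧ φ v j ≤ φ u j + 1
      symm := by
        refine ⟨fun u v h => ?_⟩
        exact ⟨h.1.symm, fun j => ⟨(h.2 j).2, (h.2 j).1⟩⟩
      loopless := ⟨fun u h => h.1 rfl⟩ } with hH
  have hGH : G ≤ H := by
    intro u v h
    exact ⟨G.ne_of_adj h, hadj u v h⟩
  have hub : ∀ v, v ≠ x₀ → H.Adj v x₀ := by
    intro v hv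
    refine ⟨hv, fun j => ?_⟩
    have := h2 v j; have := hx0 j; omega
  have hreach : ∀ u v : V, H.Reachable u v := by
    intro u v
    by_cases huv : u = v
    · subst huv; exact Reachable.refl u
    by_cases hu : u = x₀
    · subst hu
      exact ((hub v (fun h => huv h.symm)).symm).toWalk.reachable
    by_cases hv : v = x₀
    · subst hv
      exact (hub u hu).toWalk.reachable
    · exact ((hub u hu).toWalk.append ((hub v hv).symm).toWalk).reachable
  have hdle2 : ∀ u v : V, H.dist u v ≤ 2 := by
    intro u v
    by_cases huv : u = v
    · subst huv; simp [SimpleGraph.dist_self]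
    by_cases hu : u = x₀
    · subst hu
      have := H.dist_le ((hub v (fun h => huv h.symm)).symm).toWalk
      simpa using this.trans (by norm_num)
    by_cases hv : v = x₀
    · subst hv
      have := H.dist_le (hub u hu).toWalk
      simpa using this.trans (by norm_num)
    · have := H.dist_le ((hub u hu).toWalk.append ((hub v hv).symm).toWalk)
      simpa using this
  have hdist2 : ∀ u v : V, u ≠ v → ¬ H.Adj u v → H.dist u v = 2 := by
    intro u v huv hna
    have h0 : H.dist u v ≠ 0 := by
      intro heq
      rcases SimpleGraph.dist_eq_zero_iff_eq_or_not_reachable.mp heq with h | h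
      · exact huv h
      · exact h (hreach u v)
    have h1 : H.dist u v ≠ 1 := by
      intro heq
      exact hna (SimpleGraph.dist_eq_one_iff_adj.mp heq)
    have := hdle2 u v
    omega
  have hdistw : ∀ u j, H.dist u (w j) = φ u j := by
    intro u j
    have hle := h2 u j
    interval_cases h : φ u j
    · have := huniq u j h
      subst this; simp
    · have hne : u ≠ w j := by
        intro e; rw [e, hw0 j] at h; exact one_ne_zero h.symm
      have hadjw : H.Adj u (w j) := by
        refine ⟨hne, fun j' => ?_⟩
        by_cases hj : j' = j
        · subst hj; rw [hw0 j', h]; omega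
        · rw [hw1 j j' (fun e => hj e.symm)]
          have := h2 u j'; omega
      rw [SimpleGraph.dist_eq_one_iff_adj]
      exact hadjw
    · have hne : u ≠ w j := by
        intro e; rw [e, hw0 j] at h; omega
      have hna : ¬ H.Adj u (w j) := by
        rintro ⟨-, hn⟩
        have := hn j
        rw [hw0 j, h] at this
        omega
      exact hdist2 u (w j) hne hna
  refine le_trans (Nat.sInf_le ?_) (le_refl _)
  refine ⟨H, hGH, Finset.image w Finset.univ, ?_, ?_⟩
  · have hwinj : Function.Injective w := by
      intro j j' e
      by_contra hne
      have h1 : φ (w j) j' = 1 := hw1 j j' hne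
      rw [e, hw0 j'] at h1
      exact one_ne_zero h1.symm
    rw [Finset.card_image_of_injective _ hwinj, Finset.card_univ]
  · intro u v huv
    have hφ : φ u ≠ φ v := fun e => huv (hinj e)
    obtain ⟨j, hj⟩ := Function.ne_iff.mp hφ
    by_cases hA : H.Adj u v
    · have hduv : H.dist u v = 1 := SimpleGraph.dist_eq_one_iff_adj.mpr hA
      have hnear := hA.2 j
      refine ⟨w j, by simp, ?_⟩
      unfold stronglyResolves
      rw [hdistw u j, hdistw v j, hduv,
        SimpleGraph.dist_comm (G := H) (u := v) (v := u), hduv]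
      omega
    · have hdd : H.dist u v = 2 := hdist2 u v huv hA
      have : ∃ j', ¬ (φ u j' ≤ φ v j' + 1 ∧ φ v j' ≤ φ u j' + 1) := by
        by_contra hcon
        push_neg at hcon
        exact hA ⟨huv, fun j' => ⟨(hcon j').1, (hcon j').2⟩⟩
      obtain ⟨j', hj'⟩ := this
      have h2u := h2 u j'; have h2v := h2 v j'
      rcases (by omega : (φ u j' = 2 ∧ φ v j' = 0) ∨ (φ v j' = 2 ∧ φ u j' = 0)) with
        ⟨hu2, hv0⟩ | ⟨hv2, hu0⟩
      · have hvw : v = w j' := huniq v j' hv0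
        refine ⟨w j', by simp, Or.inl ?_⟩
        rw [hdistw u j', hdistw v j', hu2, hv0, hdd]
      · have huw : u = w j' := huniq u j' hu0
        refine ⟨w j', by simp, Or.inr ?_⟩
        rw [hdistw u j', hdistw v j', hv2, hu0,
          SimpleGraph.dist_comm (G := H) (u := v) (v := u), hdd]


section AuxTSD


variable {V : Type*} [Fintype V] {k : ℕ}

private def auxT (C : V → Fin k) (i : Fin k) : Finset V :=
  Finset.univ.filter (fun v => C v = i)

private lemma auxT_mem {C : V → Fin k} {i : Fin k} {v : V} : v ∈ auxT C i ↔ C v = i := by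
  simp [auxT]

private noncomputable def auxE (C : V → Fin k) (i : Fin k) :
    {x // x ∈ auxT C i} ≃ Fin (auxT C i).card :=
  (auxT C i).equivFin

open scoped Classical in
private noncomputable def auxq (C : V → Fin k) (i : Fin k) (v : V) : ℕ :=
  if h : v ∈ auxT C i then (auxE C i ⟨v, h⟩ : Fin _) else 0

private lemma auxq_lt {C : V → Fin k} {i : Fin k} {v : V} (h : v ∈ auxT C i) :
    auxq C i v < (auxT C i).card := by
  rw [auxq, dif_pos h]
  exact (auxE C i ⟨v, h⟩).2

private lemma auxq_inj {C : V → Fin k} {i : Fin k} {u v : V} (hu : u ∈ auxT C i)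
    (hv : v ∈ auxT C i) (hq : auxq C i u = auxq C i v) : u = v := by
  rw [auxq, dif_pos hu, auxq, dif_pos hv] at hq
  have h2 := (auxE C i).injective (Fin.ext hq)
  exact congrArg Subtype.val h2

private lemma auxq_symm (C : V → Fin k) (i : Fin k) (q : Fin (auxT C i).card) :
    auxq C i (((auxE C i).symm q : {x // x ∈ auxT C i}) : V) = q := by
  have hmem : (((auxE C i).symm q : {x // x ∈ auxT C i}) : V) ∈ auxT C i :=
    ((auxE C i).symm q).2
  rw [auxq, dif_pos hmem]
  have h : (⟨(((auxE C i).symm q : {x // x ∈ auxT C i}) : V), hmem⟩ :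
      {x // x ∈ auxT C i}) = (auxE C i).symm q := rfl
  rw [h, Equiv.apply_symm_apply]

private lemma auxNT1 {a b c : ℕ} (hab : a ≠ b) (ha : a < 2 ^ c) (hb : b < 2 ^ c) :
    ∃ r < c, Nat.testBit a r ≠ Nat.testBit b r := by
  by_contra hcon
  push_neg at hcon
  apply hab
  apply Nat.eq_of_testBit_eq
  intro r
  by_cases hr : r < c
  · exact hcon r hr
  · rw [Nat.testBit_eq_false_of_lt
        (lt_of_lt_of_le ha (Nat.pow_le_pow_right (by norm_num) (le_of_not_gt hr))),
      Nat.testBit_eq_false_of_lt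
        (lt_of_lt_of_le hb (Nat.pow_le_pow_right (by norm_num) (le_of_not_gt hr)))]

private lemma auxNT2 {a c : ℕ} (h0 : 0 < a) (ha : a < 2 ^ c) :
    ∃ r < c, Nat.testBit a r = true := by
  by_contra hcon
  push_neg at hcon
  have : a = 0 := by
    apply Nat.zero_of_testBit_eq_false
    intro r
    by_cases hr : r < c
    · simpa using hcon r hr
    · exact Nat.testBit_eq_false_of_lt
        (lt_of_lt_of_le ha (Nat.pow_le_pow_right (by norm_num) (le_of_not_gt hr)))
  omega

end AuxTSD

/-- Upper bound for the threshold strong dimension of a non-complete graph via a proper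
coloring, when the first `ℓ ≥ 1` color classes are singletons and the rest are larger. -/
theorem thresholdStrongDim_le_of_coloring_singletons {V : Type*} [Fintype V]
    (G : SimpleGraph V) (hG : G.Connected)
    (hnc : ¬ ∀ u v : V, u ≠ v → G.Adj u v)
    (k : ℕ) (hchrom : G.chromaticNumber = (k : ℕ∞)) (C : G.Coloring (Fin k))
    (hmono : ∀ i j : Fin k, i ≤ j → {v | C v = i}.ncard ≤ {v | C v = j}.ncard)
    (ℓ : ℕ) (hℓ1 : 1 ≤ ℓ) (hℓk : ℓ ≤ k)
    (hsmall : ∀ i : Fin k, (i : ℕ) < ℓ → {v | C v = i}.ncard = 1)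
    (hbig : ∀ i : Fin k, ℓ ≤ (i : ℕ) → 1 < {v | C v = i}.ncard) :
    thresholdStrongDim V G ≤
      ℓ - 1 + ∑ i ∈ Finset.univ.filter (fun i : Fin k => ℓ ≤ (i : ℕ)),
        Nat.clog 2 {v | C v = i}.ncard := by
  classical
  have hk : 0 < k := lt_of_lt_of_le hℓ1 hℓk
  set Cf : V → Fin k := fun x => C x with hCf
  have hvalid : ∀ {u v : V}, G.Adj u v → Cf u ≠ Cf v := fun h => C.valid h
  have hcard : ∀ i : Fin k, {v | C v = i}.ncard = (auxT Cf i).card := by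
    intro i
    rw [← Set.ncard_coe_finset]
    congr 1
    ext v
    simp [auxT, hCf]
  have hS : ∀ i : Fin k, (i : ℕ) < ℓ → (auxT Cf i).card = 1 := by
    intro i h; rw [← hcard]; exact hsmall i h
  have hB : ∀ i : Fin k, ℓ ≤ (i : ℕ) → 2 ≤ (auxT Cf i).card := by
    intro i h; rw [← hcard]; exact hbig i h
  set d : Fin k → ℕ :=
    fun i => if (i : ℕ) = 0 then 0 else
      if (i : ℕ) < ℓ then 1 else Nat.clog 2 (auxT Cf i).card with hd
  have hdm : ∀ i, d i ≤ (auxT Cf i).card := by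
    intro i
    simp only [hd]
    split_ifs with h1 h2
    · exact Nat.zero_le _
    · rw [hS i h2]
    · exact (Nat.clog_le_iff_le_pow one_lt_two).mpr Nat.lt_two_pow_self.le
  have hd1 : ∀ i : Fin k, (i : ℕ) ≠ 0 → 1 ≤ d i := by
    intro i h
    simp only [hd, if_neg h]
    split_ifs with h2
    · exact le_refl 1
    · exact Nat.clog_pos one_lt_two (hB i (le_of_not_gt h2))
  have hpow : ∀ i : Fin k, (i : ℕ) ≠ 0 → (auxT Cf i).card ≤ 2 ^ d i := by
    intro i h
    simp only [hd, if_neg h]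
    split_ifs with h2
    · rw [hS i h2]; norm_num
    · exact Nat.le_pow_clog one_lt_two _
  set w : (Σ i : Fin k, Fin (d i)) → V := fun j =>
    (((auxE Cf j.1).symm ⟨(j.2 : ℕ), lt_of_lt_of_le j.2.2 (hdm j.1)⟩ :
      {x // x ∈ auxT Cf j.1}) : V) with hww
  have hwmem : ∀ j, w j ∈ auxT Cf j.1 := fun j => ((auxE Cf j.1).symm _).2
  have hwC : ∀ j, Cf (w j) = j.1 := fun j => auxT_mem.mp (hwmem j)
  have hwq : ∀ j, auxq Cf j.1 (w j) = (j.2 : ℕ) := fun j => auxq_symm Cf j.1 _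
  set i0 : Fin k := ⟨0, hk⟩ with hi0d
  have hc0 : 0 < (auxT Cf i0).card := by
    rw [hS i0 hℓ1]; norm_num
  set x₀ : V := (((auxE Cf i0).symm ⟨0, hc0⟩ : {x // x ∈ auxT Cf i0}) : V) with hx0d
  have hx0C : Cf x₀ = i0 := auxT_mem.mp ((auxE Cf i0).symm _).2
  have hdi0 : d i0 = 0 := by simp [hd, hi0d]
  set φ : V → (Σ i : Fin k, Fin (d i)) → ℕ := fun v j =>
    if Cf v = j.1 then
      (if auxq Cf j.1 v < d j.1 then (if auxq Cf j.1 v = (j.2 : ℕ) then 0 else 1)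
       else 1 + (Nat.testBit (auxq Cf j.1 v - d j.1 + 1) (j.2 : ℕ)).toNat)
    else 1
    with hφ
  have φ_other : ∀ v j, Cf v ≠ j.1 → φ v j = 1 := by
    intro v j h
    simp only [hφ, if_neg h]
  have h2φ : ∀ v j, φ v j ≤ 2 := by
    intro v j
    simp only [hφ]
    have := Bool.toNat_le (Nat.testBit (auxq Cf j.1 v - d j.1 + 1) (j.2 : ℕ))
    split_ifs <;> omega
  have hw0 : ∀ j, φ (w j) j = 0 := by
    intro j
    simp only [hφ]
    rw [if_pos (hwC j), hwq j, if_pos j.2.2, if_pos rfl]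
  have hw1 : ∀ j j', j ≠ j' → φ (w j) j' = 1 := by
    rintro ⟨i, r⟩ ⟨i', r'⟩ hne
    by_cases hii : i = i'
    · subst hii
      have hrr : (r : ℕ) ≠ (r' : ℕ) := by
        intro e
        exact hne (by rw [Fin.ext e])
      simp only [hφ]
      rw [if_pos (hwC ⟨i, r⟩), hwq ⟨i, r⟩, if_pos r.2, if_neg hrr]
    · exact φ_other _ _ (by rw [hwC ⟨i, r⟩]; exact hii)
  have huniqφ : ∀ x j, φ x j = 0 → x = w j := by
    intro x j h
    simp only [hφ] at h
    by_cases hc : Cf x = j.1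
    · rw [if_pos hc] at h
      by_cases hlt : auxq Cf j.1 x < d j.1
      · rw [if_pos hlt] at h
        by_cases heq : auxq Cf j.1 x = (j.2 : ℕ)
        · exact auxq_inj (auxT_mem.mpr hc) (hwmem j) (by rw [heq, hwq j])
        · rw [if_neg heq] at h; omega
      · rw [if_neg hlt] at h; omega
    · rw [if_neg hc] at h; omega
  have hx0φ : ∀ j, φ x₀ j = 1 := by
    rintro ⟨i, r⟩
    by_cases hi : i = i0
    · subst hi
      exact absurd r.2 (by omega)
    · exact φ_other _ _ (by rw [hx0C]; exact fun e => hi e.symm)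
  have hadjφ : ∀ u v, G.Adj u v → ∀ j, φ u j ≤ φ v j + 1 ∧ φ v j ≤ φ u j + 1 := by
    intro u v hadj j
    have hne := hvalid hadj
    have h2u := h2φ u j
    have h2v := h2φ v j
    by_cases hu : Cf u = j.1
    · have hv : Cf v ≠ j.1 := fun e => hne (hu.trans e.symm)
      rw [φ_other v j hv]; omega
    · rw [φ_other u j hu]; omega
  have hdiff : ∀ a b : V, Cf a ≠ Cf b → (Cf a : ℕ) ≠ 0 → ∃ j, φ a j ≠ 1 ∧ φ b j = 1 := by
    intro a b hab ha0
    have hamem : a ∈ auxT Cf (Cf a) := auxT_mem.mpr rfl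
    have hqa := auxq_lt hamem
    by_cases hlt : auxq Cf (Cf a) a < d (Cf a)
    · refine ⟨⟨Cf a, ⟨auxq Cf (Cf a) a, hlt⟩⟩, ?_, φ_other b _ (fun e => hab e.symm)⟩
      simp only [hφ, if_true]
      rw [if_pos hlt]
      omega
    · have hℓi : ℓ ≤ ((Cf a) : ℕ) := by
        by_contra hsm
        push_neg at hsm
        have hcard1 := hS (Cf a) hsm
        have hd1' := hd1 (Cf a) ha0
        omega
      have hdi1 := hd1 (Cf a) ha0
      have hpw := hpow (Cf a) ha0
      obtain ⟨r, hr, hbit⟩ := auxNT2 (a := auxq Cf (Cf a) a - d (Cf a) + 1)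
        (c := d (Cf a)) (by omega) (by omega)
      refine ⟨⟨Cf a, ⟨r, hr⟩⟩, ?_, φ_other b _ (fun e => hab e.symm)⟩
      simp only [hφ, if_true]
      rw [if_neg hlt, hbit]
      decide
  have hinjφ : Function.Injective φ := by
    intro u v h
    by_contra hne
    by_cases hC : Cf u = Cf v
    · have humem : u ∈ auxT Cf (Cf u) := auxT_mem.mpr rfl
      have hvmem : v ∈ auxT Cf (Cf u) := auxT_mem.mpr hC.symm
      have hqne : auxq Cf (Cf u) u ≠ auxq Cf (Cf u) v :=
        fun e => hne (auxq_inj humem hvmem e)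
      have hqu := auxq_lt humem
      have hqv := auxq_lt hvmem
      have hbigi : ℓ ≤ ((Cf u) : ℕ) := by
        by_contra hsm
        push_neg at hsm
        have := hS (Cf u) hsm
        omega
      have hi0' : ((Cf u) : ℕ) ≠ 0 := by omega
      have hdi1 := hd1 (Cf u) hi0'
      have hpw := hpow (Cf u) hi0'
      by_cases h1 : auxq Cf (Cf u) u < d (Cf u)
      · have hu0 : φ u ⟨Cf u, ⟨auxq Cf (Cf u) u, h1⟩⟩ = 0 := by
          simp only [hφ, if_true]
          rw [if_pos h1]
        have hv0 : φ v ⟨Cf u, ⟨auxq Cf (Cf u) u, h1⟩⟩ = 0 := by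
          rw [← congrFun h _]; exact hu0
        exact hne ((huniqφ u _ hu0).trans (huniqφ v _ hv0).symm)
      · by_cases h2 : auxq Cf (Cf u) v < d (Cf u)
        · have hv0 : φ v ⟨Cf u, ⟨auxq Cf (Cf u) v, h2⟩⟩ = 0 := by
            simp only [hφ, if_true]
            rw [if_pos hC.symm, if_pos h2]
          have hu0 : φ u ⟨Cf u, ⟨auxq Cf (Cf u) v, h2⟩⟩ = 0 := by
            rw [congrFun h _]; exact hv0
          exact hne ((huniqφ u _ hu0).trans (huniqφ v _ hv0).symm)
        · obtain ⟨r, hr, hbit⟩ := auxNT1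
            (a := auxq Cf (Cf u) u - d (Cf u) + 1)
            (b := auxq Cf (Cf u) v - d (Cf u) + 1)
            (c := d (Cf u)) (by omega) (by omega) (by omega)
          have heq := congrFun h (⟨Cf u, ⟨r, hr⟩⟩ : Σ i : Fin k, Fin (d i))
          simp only [hφ, if_true] at heq
          rw [if_pos hC.symm, if_neg h1, if_neg h2] at heq
          apply hbit
          cases hx : Nat.testBit (auxq Cf (Cf u) u - d (Cf u) + 1) r <;>
            cases hy : Nat.testBit (auxq Cf (Cf u) v - d (Cf u) + 1) r <;>
            rw [hx, hy] at heq <;> simp at heq ⊢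
    · by_cases h0 : ((Cf u) : ℕ) ≠ 0
      · obtain ⟨j, hj1, hj2⟩ := hdiff u v hC h0
        exact hj1 (by rw [congrFun h j, hj2])
      · have h0v : ((Cf v) : ℕ) ≠ 0 := by
          push_neg at h0
          intro e
          exact hC (Fin.ext (by omega))
        obtain ⟨j, hj1, hj2⟩ := hdiff v u (fun e => hC e.symm) h0v
        exact hj1 (by rw [← congrFun h j, hj2])
  have hkey := key_lemma_s12 G φ w x₀ h2φ hadjφ hinjφ hw0 hw1 huniqφ hx0φ
  have hcardJ : Fintype.card (Σ i : Fin k, Fin (d i)) =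
      ℓ - 1 + ∑ i ∈ Finset.univ.filter (fun i : Fin k => ℓ ≤ (i : ℕ)),
        Nat.clog 2 {v | C v = i}.ncard := by
    rw [Fintype.card_sigma]
    simp only [Fintype.card_fin]
    have hsplit : ∀ i : Fin k, d i =
        (if 1 ≤ (i : ℕ) ∧ (i : ℕ) < ℓ then 1 else 0) +
        (if ℓ ≤ (i : ℕ) then Nat.clog 2 (auxT Cf i).card else 0) := by
      intro i
      simp only [hd]
      split_ifs <;> omega
    rw [Finset.sum_congr rfl (fun i _ => hsplit i), Finset.sum_add_distrib]
    congr 1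
    · rw [Fin.sum_univ_eq_sum_range (fun n => if 1 ≤ n ∧ n < ℓ then 1 else 0) k]
      rw [← Finset.card_filter]
      have hico : (Finset.range k).filter (fun n => 1 ≤ n ∧ n < ℓ) = Finset.Ico 1 ℓ := by
        ext n
        simp only [Finset.mem_filter, Finset.mem_range, Finset.mem_Ico]
        omega
      rw [hico, Nat.card_Ico]
    · rw [← Finset.sum_filter]
      exact Finset.sum_congr rfl (fun i _ => by rw [hcard i])
  rw [hcardJ] at hkey
  exact hkey
end

section
/- Let G be a non-complete connected graph with chromatic number k and color classes V_1,...,V_k in a proper k-coloring with 2 ≤ |V_1| ≤ ... ≤ |V_k|. Then τ_s(G) ≤ Σ_{i=1}^{k} ⌈log_2 |V_i|⌉. -/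
open SimpleGraph

lemma aux_threshold {V : Type*} [Fintype V] (G : SimpleGraph V)
    (W : Finset V) (Nr : V → V → Prop)
    (hGN : ∀ u v, G.Adj u v → u ∈ W → Nr u v)
    (sep : ∀ u v : V, u ∉ W → v ∉ W → u ≠ v →
      ∃ w ∈ W, (Nr w u ∧ ¬ Nr w v) ∨ (Nr w v ∧ ¬ Nr w u)) :
    thresholdStrongDim V G ≤ W.card := by
  classical
  let H : SimpleGraph V :=
    { Adj := fun u v => u ≠ v ∧
        ((u ∉ W ∧ v ∉ W) ∨ (u ∈ W ∧ v ∈ W) ∨ (u ∈ W ∧ Nr u v) ∨ (v ∈ W ∧ Nr v u))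
      symm := ⟨by intro u v h; exact ⟨h.1.symm, by tauto⟩⟩
      loopless := ⟨fun v h => h.1 rfl⟩ }
  have hGH : G ≤ H := by
    intro u v huv
    refine ⟨G.ne_of_adj huv, ?_⟩
    by_cases hu : u ∈ W <;> by_cases hv : v ∈ W
    · exact Or.inr (Or.inl ⟨hu, hv⟩)
    · exact Or.inr (Or.inr (Or.inl ⟨hu, hGN u v huv hu⟩))
    · exact Or.inr (Or.inr (Or.inr ⟨hv, hGN v u huv.symm hv⟩))
    · exact Or.inl ⟨hu, hv⟩
  have key : ∀ u v w : V, u ∉ W → v ∉ W → w ∈ W → u ≠ v → Nr w v → ¬ Nr w u →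
      H.dist u w = H.dist u v + H.dist v w := by
    intro u v w hu hv hw huv hNv hNu
    have hvw : H.Adj v w := ⟨fun h => hv (h ▸ hw), Or.inr (Or.inr (Or.inr ⟨hw, hNv⟩))⟩
    have huvA : H.Adj u v := ⟨huv, Or.inl ⟨hu, hv⟩⟩
    have hnuw : ¬ H.Adj u w := by
      rintro ⟨hne, h | h | h | h⟩
      · exact h.2 hw
      · exact hu h.1
      · exact hu h.1
      · exact hNu h.2
    have h1 : H.dist u v = 1 := SimpleGraph.dist_eq_one_iff_adj.2 huvA
    have h2 : H.dist v w = 1 := SimpleGraph.dist_eq_one_iff_adj.2 hvw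
    let p : H.Walk u w := SimpleGraph.Walk.cons huvA (SimpleGraph.Walk.cons hvw SimpleGraph.Walk.nil)
    have hle : H.dist u w ≤ 2 := by
      have := SimpleGraph.dist_le p
      simpa [p] using this
    have hne1 : H.dist u w ≠ 1 := fun h => hnuw (SimpleGraph.dist_eq_one_iff_adj.1 h)
    have hpos : 0 < H.dist u w :=
      SimpleGraph.Reachable.pos_dist_of_ne ⟨p⟩ (fun h => hu (h ▸ hw))
    rw [h1, h2]; omega
  have hres : isStrongResolvingSet H ↑W := by
    intro u v huv
    by_cases hv : v ∈ W
    · exact ⟨v, Finset.mem_coe.2 hv, Or.inl (by rw [SimpleGraph.dist_self, Nat.add_zero])⟩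
    by_cases hu : u ∈ W
    · exact ⟨u, Finset.mem_coe.2 hu, Or.inr (by rw [SimpleGraph.dist_self, Nat.add_zero])⟩
    obtain ⟨w, hw, hcase⟩ := sep u v hu hv huv
    rcases hcase with ⟨h1, h2⟩ | ⟨h1, h2⟩
    · exact ⟨w, Finset.mem_coe.2 hw, Or.inr (key v u w hv hu hw huv.symm h1 h2)⟩
    · exact ⟨w, Finset.mem_coe.2 hw, Or.inl (key u v w hu hv hw huv h1 h2)⟩
  exact Nat.sInf_le ⟨H, hGH, W, rfl, hres⟩

lemma exists_low_bit (m T : ℕ) (hm : m < 2 ^ T - 1) : ∃ j < T, Nat.testBit m j = false := by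
  by_contra h
  push_neg at h
  have hmeq : m = 2 ^ T - 1 := Nat.eq_of_testBit_eq fun j => by
    rcases lt_or_ge j T with hj | hj
    · have h1 : m.testBit j = true := by
        have := h j hj; revert this; cases m.testBit j <;> simp
      rw [h1, Nat.testBit_two_pow_sub_one]
      simp [hj]
    · rw [Nat.testBit_eq_false_of_lt
        (lt_of_lt_of_le (by omega : m < 2 ^ T) (Nat.pow_le_pow_right (by norm_num) hj)),
        Nat.testBit_two_pow_sub_one]
      simp; omega
  omega

lemma exists_diff_bit (a b T : ℕ) (ha : a < 2 ^ T) (hb : b < 2 ^ T) (hab : a ≠ b) :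
    ∃ j < T, Nat.testBit a j ≠ Nat.testBit b j := by
  by_contra h
  push_neg at h
  refine hab (Nat.eq_of_testBit_eq fun j => ?_)
  rcases lt_or_ge j T with hj | hj
  · exact h j hj
  · rw [Nat.testBit_eq_false_of_lt (lt_of_lt_of_le ha (Nat.pow_le_pow_right (by norm_num) hj)),
      Nat.testBit_eq_false_of_lt (lt_of_lt_of_le hb (Nat.pow_le_pow_right (by norm_num) hj))]

/-- Upper bound for the threshold strong dimension of a non-complete graph via a proper
coloring all of whose color classes have at least two vertices. -/
theorem thresholdStrongDim_le_of_coloring {V : Type*} [Fintype V]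
    (G : SimpleGraph V) (hG : G.Connected)
    (hnc : ¬ ∀ u v : V, u ≠ v → G.Adj u v)
    (k : ℕ) (hchrom : G.chromaticNumber = (k : ℕ∞)) (C : G.Coloring (Fin k))
    (hmono : ∀ i j : Fin k, i ≤ j → {v | C v = i}.ncard ≤ {v | C v = j}.ncard)
    (hbig : ∀ i : Fin k, 2 ≤ {v | C v = i}.ncard) :
    thresholdStrongDim V G ≤ ∑ i : Fin k, Nat.clog 2 {v | C v = i}.ncard := by
  classical
  let n : Fin k → ℕ := fun i => {v | C v = i}.ncard
  let t : Fin k → ℕ := fun i => Nat.clog 2 (n i)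
  have hcard : ∀ i : Fin k, Fintype.card {v // C v = i} = n i := by
    intro i
    rw [← Nat.card_eq_fintype_card]
    exact Nat.card_coe_set_eq {v | C v = i}
  let e : (i : Fin k) → {v // C v = i} ≃ Fin (n i) := fun i => Fintype.equivFinOfCardEq (hcard i)
  let idx : V → ℕ := fun v => ((e (C v)) ⟨v, rfl⟩ : Fin (n (C v))).val
  have idx_spec : ∀ (v : V) (i : Fin k) (hv : C v = i), idx v = ((e i) ⟨v, hv⟩ : Fin (n i)).val := by
    intro v i hv; subst hv; rfl
  have idx_lt : ∀ v : V, idx v < n (C v) := fun v => ((e (C v)) ⟨v, rfl⟩).isLt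
  have idx_inj : ∀ u v : V, C u = C v → idx u = idx v → u = v := by
    intro u v h hi
    rw [idx_spec u (C v) h, idx_spec v (C v) rfl] at hi
    have h2 := (e (C v)).injective (Fin.val_injective hi)
    exact congrArg Subtype.val h2
  have hn2 : ∀ i, 2 ≤ n i := hbig
  have hpow : ∀ i, n i ≤ 2 ^ t i := fun i => Nat.le_pow_clog one_lt_two _
  have htpos : ∀ i, 0 < t i := fun i => Nat.clog_pos one_lt_two (hn2 i)
  have htn : ∀ i, t i ≤ n i := fun i =>
    (Nat.clog_le_iff_le_pow one_lt_two).2 (Nat.lt_two_pow_self (n := n i)).le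
  let W : Finset V := Finset.univ.filter (fun v => idx v < t (C v))
  have memW : ∀ v : V, v ∈ W ↔ idx v < t (C v) := by
    intro v; simp [W]
  let code : V → ℕ := fun v => idx v - t (C v)
  let Nr : V → V → Prop := fun w x => C x ≠ C w ∨ Nat.testBit (code x) (idx w) = true
  -- the designated witness vertex of class i at position j
  have symm_spec : ∀ (i : Fin k) (m : Fin (n i)),
      C (((e i).symm m : {v // C v = i}) : V) = i ∧
      idx (((e i).symm m : {v // C v = i}) : V) = m.val := by
    intro i m
    refine ⟨((e i).symm m).2, ?_⟩
    rw [idx_spec _ i ((e i).symm m).2]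
    show ((e i) ((e i).symm m) : Fin (n i)).val = m.val
    rw [Equiv.apply_symm_apply]
  have wit : ∀ (i : Fin k) (j : ℕ), j < t i → ∃ w : V, w ∈ W ∧ C w = i ∧ idx w = j := by
    intro i j hj
    obtain ⟨hC1, hC2⟩ := symm_spec i ⟨j, lt_of_lt_of_le hj (htn i)⟩
    refine ⟨_, ?_, hC1, hC2⟩
    rw [memW, hC2, hC1]
    exact hj
  have hGN : ∀ u v, G.Adj u v → u ∈ W → Nr u v :=
    fun u v huv _ => Or.inl (C.valid huv).symm
  have codelt : ∀ v : V, code v < 2 ^ t (C v) := by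
    intro v
    have h1 := idx_lt v
    have h2 := hpow (C v)
    show idx v - t (C v) < 2 ^ t (C v)
    omega
  have sep : ∀ u v : V, u ∉ W → v ∉ W → u ≠ v →
      ∃ w ∈ W, (Nr w u ∧ ¬ Nr w v) ∨ (Nr w v ∧ ¬ Nr w u) := by
    intro u v hu hv huv
    rw [memW] at hu hv
    push_neg at hu hv
    by_cases hC : C u = C v
    · -- same class: codes differ
      have hne : code u ≠ code v := by
        intro h
        apply huv
        apply idx_inj u v hC
        have h1 : idx u - t (C u) = idx v - t (C v) := h
        rw [hC] at h1 hu
        omega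
      obtain ⟨j, hj, hbit⟩ := exists_diff_bit (code u) (code v) (t (C u))
        (codelt u) (by rw [hC]; exact codelt v) hne
      obtain ⟨w, hwW, hwC, hwidx⟩ := wit (C u) j hj
      refine ⟨w, hwW, ?_⟩
      have hCuw : ¬ (C u ≠ C w) := by rw [hwC]; simp
      have hCvw : ¬ (C v ≠ C w) := by rw [hwC, ← hC]; simp
      cases hb1 : (code u).testBit j <;> cases hb2 : (code v).testBit j
      · rw [hb1, hb2] at hbit; exact absurd rfl hbit
      · refine Or.inr ⟨Or.inr (by rw [hwidx]; exact hb2), ?_⟩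
        rintro (h | h)
        · exact hCuw h
        · rw [hwidx, hb1] at h; exact Bool.false_ne_true h
      · refine Or.inl ⟨Or.inr (by rw [hwidx]; exact hb1), ?_⟩
        rintro (h | h)
        · exact hCvw h
        · rw [hwidx, hb2] at h; exact Bool.false_ne_true h
      · rw [hb1, hb2] at hbit; exact absurd rfl hbit
    · -- different classes
      have hcu1 : code u < 2 ^ t (C u) - 1 := by
        have h1 := idx_lt u
        have h2 := hpow (C u)
        have h3 := htpos (C u)
        have h4 : 2 ^ 1 ≤ 2 ^ t (C u) := Nat.pow_le_pow_right (by norm_num) (htpos (C u))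
        show idx u - t (C u) < 2 ^ t (C u) - 1
        omega
      obtain ⟨j, hj, hb⟩ := exists_low_bit (code u) (t (C u)) hcu1
      obtain ⟨w, hwW, hwC, hwidx⟩ := wit (C u) j hj
      refine ⟨w, hwW, Or.inr ⟨Or.inl (by rw [hwC]; exact fun h => hC h.symm), ?_⟩⟩
      rintro (h | h)
      · exact h hwC.symm
      · rw [hwidx, hb] at h; exact Bool.false_ne_true h
  have hWcard : W.card = ∑ i : Fin k, t i := by
    rw [Finset.card_eq_sum_card_fiberwise (fun v _ => Finset.mem_univ (C v))]
    refine Finset.sum_congr rfl fun i _ => ?_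
    let g : Fin (t i) → V := fun j => (((e i).symm ⟨j.1, lt_of_lt_of_le j.2 (htn i)⟩ : {v // C v = i}) : V)
    have hinj : Function.Injective g := by
      intro a b hab
      have h1 : ((e i).symm ⟨a.1, lt_of_lt_of_le a.2 (htn i)⟩) = ((e i).symm ⟨b.1, lt_of_lt_of_le b.2 (htn i)⟩) :=
        Subtype.ext hab
      have h2 := (e i).symm.injective h1
      have h3 : a.1 = b.1 := congrArg (fun x : Fin (n i) => x.val) h2
      exact Fin.ext h3
    have himg : W.filter (fun v => C v = i) = Finset.image g Finset.univ := by
      ext v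
      simp only [Finset.mem_filter, Finset.mem_image, Finset.mem_univ, true_and]
      constructor
      · rintro ⟨hvW, hvC⟩
        rw [memW, hvC] at hvW
        refine ⟨⟨idx v, hvW⟩, ?_⟩
        have h1 : (e i) ⟨v, hvC⟩ = ⟨idx v, lt_of_lt_of_le hvW (htn i)⟩ :=
          Fin.ext (idx_spec v i hvC).symm
        show (((e i).symm ⟨idx v, _⟩ : {x // C x = i}) : V) = v
        rw [← h1, Equiv.symm_apply_apply]
      · rintro ⟨j, rfl⟩
        obtain ⟨hC1, hC2⟩ := symm_spec i ⟨j.1, lt_of_lt_of_le j.2 (htn i)⟩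
        exact ⟨(memW _).2 (by rw [hC2, hC1]; exact j.2), hC1⟩
    rw [himg, Finset.card_image_of_injective _ hinj, Finset.card_univ, Fintype.card_fin]
  have := aux_threshold G W Nr hGN sep
  rw [hWcard] at this
  exact this
end

section
/- If T is a tree with n ≥ 2 vertices, then the threshold strong dimension of T satisfies τ_s(T) ≤ ⌈log_2 n⌉. -/
open SimpleGraph

set_option linter.unusedSectionVars false

section AuxTree
variable {V : Type*} [DecidableEq V] {T : SimpleGraph V}

private lemma concat_isPath' {u v x : V} {p : T.Walk u v} (hp : p.IsPath) (h : T.Adj v x)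
    (hx : x ∉ p.support) : (p.concat h).IsPath := by
  rw [← Walk.isPath_reverse_iff, Walk.reverse_concat]
  exact hp.reverse.cons (by simpa [Walk.support_reverse] using hx)

private lemma exists_isPath_length_dist (hc : T.Connected) (u v : V) :
    ∃ p : T.Walk u v, p.IsPath ∧ p.length = T.dist u v := by
  obtain ⟨q, hq⟩ := hc.exists_walk_length_eq_dist u v
  refine ⟨q.bypass, q.bypass_isPath, le_antisymm ?_ (SimpleGraph.dist_le _)⟩
  calc q.bypass.length ≤ q.length := Walk.length_bypass_le _
    _ = T.dist u v := hq

private lemma tree_adj_dist_succ (hT : T.IsTree) (r : V) {u v : V} (huv : T.Adj u v)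
    (hle : T.dist r u ≤ T.dist r v) : T.dist r v = T.dist r u + 1 := by
  have hc := hT.isConnected
  obtain ⟨p, hp, hlen⟩ := exists_isPath_length_dist hc r u
  have hub : T.dist r v ≤ T.dist r u + 1 := by
    have h1 := SimpleGraph.dist_le (p.concat huv)
    rw [Walk.length_concat] at h1
    omega
  rcases Nat.lt_or_ge (T.dist r u) (T.dist r v) with h | h
  · omega
  exfalso
  by_cases hv : v ∈ p.support
  · have h1 : T.dist r v ≤ (p.takeUntil v hv).length := SimpleGraph.dist_le _
    have h2 := congrArg Walk.length (p.take_spec hv)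
    rw [Walk.length_append] at h2
    have h3 : (p.dropUntil v hv).length ≠ 0 := fun h0 =>
      huv.ne (Walk.eq_of_length_eq_zero h0).symm
    omega
  · obtain ⟨q, hq, hqlen⟩ := exists_isPath_length_dist hc r v
    have hun := hT.IsAcyclic.path_unique ⟨p.concat huv, concat_isPath' hp huv hv⟩ ⟨q, hq⟩
    have := congrArg (fun P : T.Path r v => P.val.length) hun
    simp only [Walk.length_concat] at this
    omega

private lemma tree_parent_unique (hT : T.IsTree) (r : V) {v u₁ u₂ : V}
    (h1 : T.Adj u₁ v) (h2 : T.Adj u₂ v)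
    (hd1 : T.dist r u₁ + 1 = T.dist r v) (hd2 : T.dist r u₂ + 1 = T.dist r v) : u₁ = u₂ := by
  have hc := hT.isConnected
  obtain ⟨p₁, hp₁, hl₁⟩ := exists_isPath_length_dist hc r u₁
  obtain ⟨p₂, hp₂, hl₂⟩ := exists_isPath_length_dist hc r u₂
  have hv₁ : v ∉ p₁.support := fun hv => by
    have ha : T.dist r v ≤ (p₁.takeUntil v hv).length := SimpleGraph.dist_le _
    have hb := Walk.length_takeUntil_le p₁ hv
    omega
  have hv₂ : v ∉ p₂.support := fun hv => by
    have ha : T.dist r v ≤ (p₂.takeUntil v hv).length := SimpleGraph.dist_le _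
    have hb := Walk.length_takeUntil_le p₂ hv
    omega
  have hun := hT.IsAcyclic.path_unique ⟨p₁.concat h1, concat_isPath' hp₁ h1 hv₁⟩
    ⟨p₂.concat h2, concat_isPath' hp₂ h2 hv₂⟩
  obtain ⟨hv, -⟩ := Walk.concat_inj (congrArg Subtype.val hun)
  exact hv

end AuxTree

/-- If `T` is a tree with `n ≥ 2` vertices, then `τ_s(T) ≤ ⌈log₂ n⌉`. -/
theorem thresholdStrongDim_tree_le_clog {V : Type*} [Fintype V]
    (T : SimpleGraph V) (hT : T.IsTree) (hn : 2 ≤ Fintype.card V) :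
    thresholdStrongDim V T ≤ Nat.clog 2 (Fintype.card V) := by
  classical
  set n := Fintype.card V with hn_def
  set k := Nat.clog 2 n with hk_def
  have hn2k : n ≤ 2 ^ k := Nat.le_pow_clog (by norm_num) _
  have hkn : k < n := by
    have h1 : n - 1 < 2 ^ (n - 1) := Nat.lt_two_pow_self
    have h2 : n ≤ 2 ^ (n - 1) := by omega
    have h3 : k ≤ n - 1 := (Nat.clog_le_iff_le_pow (by norm_num)).mpr h2
    omega
  have hne : Nonempty V := Fintype.card_pos_iff.mp (by omega)
  obtain ⟨r⟩ := hne
  -- choose W of size k maximizing the sum of distances from r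
  obtain ⟨W, hWmem, hWmax⟩ := Finset.exists_max_image
    ((Finset.univ : Finset V).powersetCard k) (fun s => ∑ v ∈ s, T.dist r v)
    (Finset.powersetCard_nonempty.mpr (by simp; omega))
  have hWcard : W.card = k := (Finset.mem_powersetCard.mp hWmem).2
  -- W dominates distances
  have hWdom : ∀ w ∈ W, ∀ u, u ∉ W → T.dist r u ≤ T.dist r w := by
    intro w hw u hu
    by_contra hcon
    push_neg at hcon
    have hmem : insert u (W.erase w) ∈ (Finset.univ : Finset V).powersetCard k := by
      rw [Finset.mem_powersetCard]
      refine ⟨Finset.subset_univ _, ?_⟩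
      rw [Finset.card_insert_of_notMem (fun h => hu (Finset.mem_of_mem_erase h)),
        Finset.card_erase_of_mem hw, hWcard]
      have : 1 ≤ k := by
        rcases Finset.card_pos.mpr ⟨w, hw⟩ with h
        omega
      omega
    have hsum := hWmax _ hmem
    rw [Finset.sum_insert (fun h => hu (Finset.mem_of_mem_erase h))] at hsum
    have herase : ∑ v ∈ W.erase w, T.dist r v + T.dist r w = ∑ v ∈ W, T.dist r v :=
      Finset.sum_erase_add _ _ hw
    omega
  -- each w ∈ W has at most one neighbour outside W
  have hWpar : ∀ w ∈ W, ∀ u₁ u₂, u₁ ∉ W → u₂ ∉ W → T.Adj w u₁ → T.Adj w u₂ → u₁ = u₂ := by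
    intro w hw u₁ u₂ h1 h2 ha1 ha2
    have hd1 := tree_adj_dist_succ hT r ha1.symm (hWdom w hw u₁ h1)
    have hd2 := tree_adj_dist_succ hT r ha2.symm (hWdom w hw u₂ h2)
    exact tree_parent_unique hT r ha1.symm ha2.symm (by omega) (by omega)
  -- enumerate W
  have hWcard' : Fintype.card (↥W) = k := by rw [Fintype.card_coe, hWcard]
  let e : ↥W ≃ Fin k := Fintype.equivFinOfCardEq hWcard'
  let w : Fin k → V := fun i => ((e.symm i : ↥W) : V)
  have hwW : ∀ i, w i ∈ W := fun i => (e.symm i).2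
  have hwinj : Function.Injective w := fun i j h =>
    (Equiv.symm_apply_eq e).mp (Subtype.ext h) ▸ by
      simpa using congrArg e (Subtype.ext h : e.symm i = e.symm j)
  have hwsurj : ∀ v (hv : v ∈ W), v = w (e ⟨v, hv⟩) := fun v hv => by
    simp [w, Equiv.symm_apply_apply]
  -- the forced bit sets
  let F : V → Finset (Fin k) := fun v => Finset.univ.filter (fun i => T.Adj (w i) v)
  have hFdisj : ∀ u v, u ∉ W → v ∉ W → u ≠ v → Disjoint (F u) (F v) := by
    intro u v hu hv huv
    rw [Finset.disjoint_left]
    intro i hiu hiv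
    rw [Finset.mem_filter] at hiu hiv
    exact huv (hWpar (w i) (hwW i) u v hu hv hiu.2 hiv.2)
  -- construct β
  let C₀ : Finset V := Finset.univ.filter (fun v => v ∉ W ∧ F v = ∅)
  let C₁ : Finset V := Finset.univ.filter (fun v => v ∉ W ∧ F v ≠ ∅)
  let Avail : Finset (Finset (Fin k)) := Finset.univ \ C₁.image F
  have hcards : C₀.card ≤ Avail.card := by
    have h1 : Avail.card = 2 ^ k - (C₁.image F).card := by
      rw [Finset.card_sdiff_of_subset (Finset.subset_univ _), Finset.card_univ, Fintype.card_finset,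
        Fintype.card_fin]
    have h2 : (C₁.image F).card ≤ C₁.card := Finset.card_image_le
    have h3 : C₀.card + C₁.card ≤ n := by
      rw [← Finset.card_union_of_disjoint]
      · exact (Finset.card_le_card (Finset.subset_univ _)).trans (le_of_eq Finset.card_univ)
      · rw [Finset.disjoint_left]
        intro a ha hb
        rw [Finset.mem_filter] at ha hb
        exact hb.2.2 ha.2.2
    omega
  obtain ⟨g⟩ : Nonempty (↥C₀ ↪ ↥Avail) := Function.Embedding.nonempty_iff_card_le.mpr
    (by rwa [Fintype.card_coe, Fintype.card_coe])
  let β : V → Finset (Fin k) := fun v => if h : v ∈ C₀ then (g ⟨v, h⟩ : Finset (Fin k)) else F v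
  have hβforced : ∀ v, v ∉ W → ∀ i, T.Adj (w i) v → i ∈ β v := by
    intro v hv i hadj
    have hiF : i ∈ F v := Finset.mem_filter.mpr ⟨Finset.mem_univ _, hadj⟩
    have hv0 : v ∉ C₀ := by
      simp only [C₀, Finset.mem_filter]
      rintro ⟨-, -, hF⟩
      rw [hF] at hiF
      exact absurd hiF (Finset.notMem_empty _)
    simpa [β, hv0] using hiF
  have hβinj : ∀ u v, u ∉ W → v ∉ W → u ≠ v → β u ≠ β v := by
    intro u v hu hv huv heq
    by_cases hu0 : u ∈ C₀ <;> by_cases hv0 : v ∈ C₀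
    · have : (⟨u, hu0⟩ : ↥C₀) = ⟨v, hv0⟩ := Subtype.ext (by simpa [β, hu0, hv0] using heq)
      exact huv (congrArg Subtype.val this)
    · -- u ∈ C₀, v ∉ C₀ : β u ∈ Avail but β v = F v ∈ image
      have hv1 : v ∈ C₁ := by
        simp only [C₁, Finset.mem_filter, Finset.mem_univ, true_and]
        refine ⟨hv, ?_⟩
        intro hF
        exact hv0 (by simp [C₀, hv, hF])
      have hmem : (g ⟨u, hu0⟩ : Finset (Fin k)) ∈ Avail := (g ⟨u, hu0⟩).2
      rw [Finset.mem_sdiff] at hmem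
      refine hmem.2 (Finset.mem_image.mpr ⟨v, hv1, ?_⟩)
      simpa [β, hu0, hv0] using heq.symm
    · have hu1 : u ∈ C₁ := by
        simp only [C₁, Finset.mem_filter, Finset.mem_univ, true_and]
        refine ⟨hu, fun hF => hu0 (by simp [C₀, hu, hF])⟩
      have hmem : (g ⟨v, hv0⟩ : Finset (Fin k)) ∈ Avail := (g ⟨v, hv0⟩).2
      rw [Finset.mem_sdiff] at hmem
      refine hmem.2 (Finset.mem_image.mpr ⟨u, hu1, ?_⟩)
      simpa [β, hu0, hv0] using heq
    · have hFu : F u ≠ ∅ := fun hF => hu0 (by simp [C₀, hu, hF])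
      have heq' : F u = F v := by simpa [β, hu0, hv0] using heq
      have := hFdisj u v hu hv huv
      rw [heq', disjoint_self] at this
      exact hFu (heq'.trans this)
  -- the host graph H
  let H : SimpleGraph V :=
    { Adj := fun u v => u ≠ v ∧ ∀ i : Fin k,
        (u = w i → v ∉ W → i ∈ β v) ∧ (v = w i → u ∉ W → i ∈ β u),
      symm := ⟨fun u v h => ⟨h.1.symm, fun i => ⟨(h.2 i).2, (h.2 i).1⟩⟩⟩,
      loopless := ⟨fun u h => h.1 rfl⟩ }
  have hTH : T ≤ H := by
    intro u v hadj
    refine ⟨hadj.ne, fun i => ⟨?_, ?_⟩⟩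
    · rintro rfl hv; exact hβforced v hv i hadj
    · rintro rfl hu; exact hβforced u hu i hadj.symm
  have hHconn : H.Connected := hT.isConnected.mono hTH
  -- adjacency facts
  have hAdjCC : ∀ u v, u ∉ W → v ∉ W → u ≠ v → H.Adj u v := by
    intro u v hu hv huv
    refine ⟨huv, fun i => ⟨?_, ?_⟩⟩
    · rintro rfl; exact absurd (hwW i) hu
    · rintro rfl; exact absurd (hwW i) hv
  have hAdjWC : ∀ (i : Fin k) v, v ∉ W → i ∈ β v → H.Adj (w i) v := by
    intro i v hv hβv
    refine ⟨fun h => hv (h ▸ hwW i), fun j => ⟨?_, ?_⟩⟩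
    · intro hij _
      exact hwinj hij ▸ hβv
    · rintro rfl; exact absurd (hwW j) hv
  have hNAdjWC : ∀ (i : Fin k) u, u ∉ W → i ∉ β u → ¬ H.Adj u (w i) := by
    intro i u hu hβu hadj
    exact hβu ((hadj.2 i).2 rfl hu)
  -- distance facts
  have hdist2 : ∀ (i : Fin k) u v, u ∉ W → v ∉ W → u ≠ v → i ∉ β u → i ∈ β v →
      H.dist u (w i) = 2 := by
    intro i u v hu hv huv hβu hβv
    have hne : u ≠ w i := fun h => hu (h ▸ hwW i)
    have h0 : H.dist u (w i) ≠ 0 := fun h =>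
      hne ((hHconn.dist_eq_zero_iff).mp h)
    have h1 : H.dist u (w i) ≠ 1 := fun h =>
      hNAdjWC i u hu hβu (SimpleGraph.dist_eq_one_iff_adj.mp h)
    have hle : H.dist u (w i) ≤ 2 := by
      have := SimpleGraph.dist_le
        (Walk.cons (hAdjCC u v hu hv huv) (Walk.cons ((hAdjWC i v hv hβv).symm) Walk.nil))
      simpa using this
    omega
  -- strong resolving set
  have hres : isStrongResolvingSet H ↑W := by
    intro u v huv
    by_cases hu : u ∈ W
    · exact ⟨u, hu, Or.inr (by rw [SimpleGraph.dist_self]; ring)⟩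
    by_cases hv : v ∈ W
    · exact ⟨v, hv, Or.inl (by rw [SimpleGraph.dist_self]; ring)⟩
    have hβ := hβinj u v hu hv huv
    have : ∃ i, (i ∈ β u ∧ i ∉ β v) ∨ (i ∈ β v ∧ i ∉ β u) := by
      by_contra hcon
      push_neg at hcon
      exact hβ (Finset.ext fun i => by
        have := hcon i
        tauto)
    obtain ⟨i, hi⟩ := this
    have hduv : H.dist u v = 1 := SimpleGraph.dist_eq_one_iff_adj.mpr (hAdjCC u v hu hv huv)
    rcases hi with ⟨hiu, hiv⟩ | ⟨hiv, hiu⟩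
    · refine ⟨w i, hwW i, Or.inr ?_⟩
      have hd1 : H.dist u (w i) = 1 :=
        SimpleGraph.dist_eq_one_iff_adj.mpr ((hAdjWC i u hu hiu).symm)
      have hd2 : H.dist v (w i) = 2 := hdist2 i v u hv hu (Ne.symm huv) hiv hiu
      rw [hd1, hd2, SimpleGraph.dist_comm, hduv]
    · refine ⟨w i, hwW i, Or.inl ?_⟩
      have hd1 : H.dist v (w i) = 1 :=
        SimpleGraph.dist_eq_one_iff_adj.mpr ((hAdjWC i v hv hiv).symm)
      have hd2 : H.dist u (w i) = 2 := hdist2 i u v hu hv huv hiu hiv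
      rw [hd1, hd2, hduv]
  exact Nat.sInf_le ⟨H, hTH, W, hWcard, hres⟩
end

section
/- A tree T has strong dimension ℓ − 1 if and only if T has exactly ℓ leaves. -/
open SimpleGraph

/-- If `u` is a leaf with unique neighbor `y`, then for any `z ≠ u`,
`dist z u = dist z y + 1`. -/
private lemma dist_leaf_step {V : Type*} {T : SimpleGraph V} (hc : T.Connected)
    {u y z : V} (hy : T.neighborSet u = {y}) (hz : z ≠ u) :
    T.dist z u = T.dist z y + 1 := by
  obtain ⟨p, hp⟩ := hc.exists_walk_length_eq_dist u z
  cases p with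
  | nil => exact absurd rfl hz
  | @cons _ b _ h q =>
      have hb : b = y := by
        have : b ∈ T.neighborSet u := h
        rwa [hy, Set.mem_singleton_iff] at this
      subst hb
      have h1 : T.dist b z + 1 ≤ T.dist u z := by
        have := SimpleGraph.dist_le q
        simpa using Nat.add_le_add_right this 1 |>.trans_eq (by simpa using hp)
      have h2 : T.dist u z ≤ 1 + T.dist b z := by
        have htri : T.dist u z ≤ T.dist u b + T.dist b z := hc.dist_triangle
        have : T.dist u b = 1 := SimpleGraph.dist_eq_one_iff_adj.mpr h
        omega
      have c1 : T.dist z u = T.dist u z := SimpleGraph.dist_comm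
      have c2 : T.dist z b = T.dist b z := SimpleGraph.dist_comm
      omega

/-- In a tree, for `w ≠ u` there is at most one neighbor of `w` that is not
strictly farther from `u` than `w`. -/
private lemma tree_unique_low {V : Type*} [DecidableEq V] {T : SimpleGraph V} (hT : T.IsTree)
    {u w y₁ y₂ : V} (h1 : T.Adj w y₁) (h2 : T.Adj w y₂)
    (d1 : T.dist u y₁ ≤ T.dist u w) (d2 : T.dist u y₂ ≤ T.dist u w) : y₁ = y₂ := by
  have hc := hT.isConnected
  have key : ∀ y : V, T.Adj w y → T.dist u y ≤ T.dist u w →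
      ∃ q : T.Walk w u, q.IsPath ∧ q.getVert 1 = y := by
    intro y hy hd
    obtain ⟨p, hp, hlen⟩ := hc.exists_path_of_dist u y
    have hw : w ∉ p.support := by
      intro hmem
      have e1 : T.dist u w ≤ (p.takeUntil w hmem).length := SimpleGraph.dist_le _
      have e2 : T.dist w y ≤ (p.dropUntil w hmem).length := SimpleGraph.dist_le _
      have e3 : (p.takeUntil w hmem).length + (p.dropUntil w hmem).length = p.length := by
        rw [← SimpleGraph.Walk.length_append, SimpleGraph.Walk.take_spec]
      have e4 : T.dist w y = 0 := by omega
      exact hy.ne (hc.dist_eq_zero_iff.mp e4)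
    refine ⟨SimpleGraph.Walk.cons hy p.reverse, ?_, ?_⟩
    · rw [SimpleGraph.Walk.cons_isPath_iff]
      refine ⟨hp.reverse, ?_⟩
      rwa [SimpleGraph.Walk.support_reverse, List.mem_reverse]
    · rw [SimpleGraph.Walk.getVert_cons_succ, SimpleGraph.Walk.getVert_zero]
  obtain ⟨q1, hq1, hv1⟩ := key y₁ h1 d1
  obtain ⟨q2, hq2, hv2⟩ := key y₂ h2 d2
  have := hT.IsAcyclic.path_unique ⟨q1, hq1⟩ ⟨q2, hq2⟩
  have hq : q1 = q2 := congrArg Subtype.val this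
  rw [← hv1, ← hv2, hq]

/-- In a finite tree, beyond any pair `u ≠ v` there is a leaf `w` with
`v` on the `u`–`w` geodesic. -/
private lemma exists_leaf_beyond {V : Type*} [Fintype V] {T : SimpleGraph V}
    (hT : T.IsTree) {u v : V} (huv : u ≠ v) :
    ∃ w, (T.neighborSet w).ncard = 1 ∧ T.dist u w = T.dist u v + T.dist v w := by
  classical
  have hc := hT.isConnected
  set S : Finset V := Finset.univ.filter
    (fun w => T.dist u w = T.dist u v + T.dist v w) with hS
  have hvS : v ∈ S := by simp [hS]
  obtain ⟨w, hwS, hmax⟩ := Finset.exists_max_image S (fun w => T.dist u w) ⟨v, hvS⟩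
  have hw : T.dist u w = T.dist u v + T.dist v w := by
    simpa [hS] using hwS
  have hduv : 0 < T.dist u v := hc.pos_dist_of_ne huv
  have hwu : w ≠ u := by
    intro h; subst h
    simp only [SimpleGraph.dist_self] at hw
    omega
  -- every neighbor of w is at distance ≤ dist u w from u
  have hnb : ∀ y, T.Adj w y → T.dist u y ≤ T.dist u w := by
    intro y hy
    by_contra hgt
    push_neg at hgt
    have t1 : T.dist u y ≤ T.dist u w + 1 := by
      have := hc.dist_triangle (u := u) (v := w) (w := y)
      have : T.dist w y = 1 := SimpleGraph.dist_eq_one_iff_adj.mpr hy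
      omega
    have heq : T.dist u y = T.dist u w + 1 := by omega
    have t2 : T.dist u y ≤ T.dist u v + T.dist v y := hc.dist_triangle
    have t3 : T.dist v y ≤ T.dist v w + 1 := by
      have := hc.dist_triangle (u := v) (v := w) (w := y)
      have : T.dist w y = 1 := SimpleGraph.dist_eq_one_iff_adj.mpr hy
      omega
    have hyeq : T.dist u y = T.dist u v + T.dist v y := by omega
    have hyS : y ∈ S := by simp [hS, hyeq]
    have := hmax y hyS
    omega
  -- w has a neighbor
  obtain ⟨p, hlen⟩ := hc.exists_walk_length_eq_dist w u
  cases p with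
  | nil => exact absurd rfl hwu
  | @cons _ b _ h q =>
      refine ⟨w, ?_, hw⟩
      have : T.neighborSet w = {b} := by
        ext z
        simp only [SimpleGraph.mem_neighborSet, Set.mem_singleton_iff]
        constructor
        · intro hz
          exact tree_unique_low hT hz h (hnb z hz) (hnb b h)
        · intro hz; subst hz; exact h
      rw [this, Set.ncard_singleton]

/-- If `u` is a leaf and `u` lies on the `v`–`w` geodesic (`v ≠ u`), then `w = u`. -/
private lemma leaf_forced {V : Type*} {T : SimpleGraph V} (hc : T.Connected)
    {u v w : V} (hu : (T.neighborSet u).ncard = 1) (hvu : v ≠ u)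
    (h : T.dist v w = T.dist v u + T.dist u w) : w = u := by
  by_contra hwu
  obtain ⟨y, hy⟩ := Set.ncard_eq_one.mp hu
  have h1 : T.dist v u = T.dist v y + 1 := dist_leaf_step hc hy hvu
  have h2 : T.dist w u = T.dist w y + 1 := dist_leaf_step hc hy hwu
  have ht : T.dist v w ≤ T.dist v y + T.dist y w := hc.dist_triangle
  have c1 : T.dist u w = T.dist w u := SimpleGraph.dist_comm
  have c2 : T.dist y w = T.dist w y := SimpleGraph.dist_comm
  omega

private lemma two_leaves {V : Type*} [Fintype V] {T : SimpleGraph V}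
    (hT : T.IsTree) {u v : V} (huv : u ≠ v) :
    ∃ w w', w ≠ w' ∧ (T.neighborSet w).ncard = 1 ∧ (T.neighborSet w').ncard = 1 ∧
      T.dist u w = T.dist u v + T.dist v w ∧ T.dist v w' = T.dist v u + T.dist u w' := by
  obtain ⟨w, hwl, hwd⟩ := exists_leaf_beyond hT huv
  obtain ⟨w', hw'l, hw'd⟩ := exists_leaf_beyond hT huv.symm
  refine ⟨w, w', ?_, hwl, hw'l, hwd, hw'd⟩
  intro h; subst h
  have c1 : T.dist v u = T.dist u v := SimpleGraph.dist_comm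
  have hp : 0 < T.dist u v := hT.isConnected.pos_dist_of_ne huv
  omega

private lemma strongDim_tree {V : Type*} [Fintype V] {T : SimpleGraph V}
    (hT : T.IsTree) {u0 v0 : V} (hne : u0 ≠ v0) :
    strongDim V T = {v : V | (T.neighborSet v).ncard = 1}.ncard - 1 := by
  classical
  have hc := hT.isConnected
  set L : Set V := {v : V | (T.neighborSet v).ncard = 1} with hL
  have hLfin : L.Finite := Set.toFinite L
  set F : Finset V := hLfin.toFinset with hF
  have hFcard : F.card = L.ncard := (Set.ncard_eq_toFinset_card L hLfin).symm
  have hmemF : ∀ z : V, z ∈ F ↔ (T.neighborSet z).ncard = 1 := by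
    intro z; rw [hF, Set.Finite.mem_toFinset]; rfl
  obtain ⟨x, x', hxx', hxl, _, _, _⟩ := two_leaves hT hne
  have hxF : x ∈ F := (hmemF x).mpr hxl
  have upper : (F.card - 1) ∈
      {n | ∃ W : Finset V, W.card = n ∧ isStrongResolvingSet T ↑W} := by
    refine ⟨F.erase x, by rw [Finset.card_erase_of_mem hxF], ?_⟩
    intro u v huv
    obtain ⟨w, w', hww', hwl, hw'l, hwd, hw'd⟩ := two_leaves hT huv
    by_cases hwx : w = x
    · refine ⟨w', ?_, Or.inr hw'd⟩
      exact Finset.mem_coe.mpr (Finset.mem_erase.mpr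
        ⟨fun h => hww' (hwx.trans h.symm), (hmemF w').mpr hw'l⟩)
    · exact ⟨w, Finset.mem_coe.mpr (Finset.mem_erase.mpr ⟨hwx, (hmemF w).mpr hwl⟩),
        Or.inl hwd⟩
  have lower : ∀ n ∈ {n | ∃ W : Finset V, W.card = n ∧ isStrongResolvingSet T ↑W},
      F.card - 1 ≤ n := by
    rintro n ⟨W, hWcard, hres⟩
    have h1 : (F \ W).card ≤ 1 := by
      rw [Finset.card_le_one]
      intro a ha b hb
      by_contra hab
      simp only [Finset.mem_sdiff] at ha hb
      obtain ⟨z, hzW, hsr⟩ := hres a b hab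
      have haL : (T.neighborSet a).ncard = 1 := (hmemF a).mp ha.1
      have hbL : (T.neighborSet b).ncard = 1 := (hmemF b).mp hb.1
      cases hsr with
      | inl h =>
          have hz : z = b := leaf_forced hc hbL hab h
          exact hb.2 (hz ▸ hzW)
      | inr h =>
          have hz : z = a := leaf_forced hc haL (Ne.symm hab) h
          exact ha.2 (hz ▸ hzW)
    have h2 : F.card ≤ (F \ W).card + W.card := Finset.card_le_card_sdiff_add_card
    omega
  rw [strongDim, ← hFcard]
  exact le_antisymm (Nat.sInf_le upper) (le_csInf ⟨_, upper⟩ lower)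

/-- A tree has strong dimension `ℓ - 1` iff it has exactly `ℓ` leaves. -/
theorem strongDim_tree_iff_leaves {V : Type*} [Fintype V]
    (T : SimpleGraph V) (hT : T.IsTree) (ℓ : ℕ) (hℓ : 2 ≤ ℓ) :
    strongDim V T = ℓ - 1 ↔ {v : V | (T.neighborSet v).ncard = 1}.ncard = ℓ := by
  classical
  constructor
  · intro h
    by_cases hsub : ∀ u v : V, u = v
    · exfalso
      have hres : isStrongResolvingSet T (↑(∅ : Finset V)) :=
        fun u v huv => absurd (hsub u v) huv
      have h0 : strongDim V T = 0 :=
        Nat.eq_zero_of_le_zero (Nat.sInf_le ⟨∅, Finset.card_empty, hres⟩)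
      omega
    · push_neg at hsub
      obtain ⟨u, v, huv⟩ := hsub
      have hcore := strongDim_tree hT huv
      obtain ⟨w, w', hww', hwl, hw'l, _, _⟩ := two_leaves hT huv
      have h2 : 1 < {v : V | (T.neighborSet v).ncard = 1}.ncard := by
        have hsub2 : ({w, w'} : Set V) ⊆ {v : V | (T.neighborSet v).ncard = 1} := by
          intro z hz
          rcases hz with hz | hz
          · subst hz; exact hwl
          · rw [hz]; exact hw'l
        calc 1 < ({w, w'} : Set V).ncard := by rw [Set.ncard_pair hww']; omega
          _ ≤ _ := Set.ncard_le_ncard hsub2 (Set.toFinite _)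
      omega
  · intro h
    have h2 : 1 < {v : V | (T.neighborSet v).ncard = 1}.ncard := by omega
    obtain ⟨a, b, -, -, hab⟩ :=
      (Set.one_lt_ncard_iff (Set.toFinite _)).mp h2
    rw [strongDim_tree hT hab, h]
end
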